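/- arXiv:2009.01699 — 5 statements merged into one kernel-verified Lean document; each statement's English description precedes it below -/
import Mathlib

section
/- Let A be a random n×n real matrix with columns X_1, …, X_n, and for each k let H_k denote the span of all columns except the k-th. Then for every δ, ρ ∈ (0,1) and every ε ≥ 0, P[inf_{x ∈ Incomp_n(δ,ρ)} ‖Ax‖₂ ≤ ερ n^{−1/2}] ≤ (1/(δn)) · Σ_{k=1}^{n} P[dist(X_k, H_k) ≤ ε]. -/
open MeasureTheory ProbabilityTheory Matrix
open scoped ENNReal

noncomputable section

/-- The Euclidean norm of a finite real vector. -/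
def euclNorm {m : ℕ} (v : Fin m → ℝ) : ℝ := Real.sqrt (∑ i, v i ^ 2)

/-- A vector of `Fin m → ℝ` regarded as an element of Euclidean space. -/
def toE {m : ℕ} (v : Fin m → ℝ) : EuclideanSpace ℝ (Fin m) :=
  (WithLp.equiv 2 (Fin m → ℝ)).symm v

/-- The smallest singular value of a square matrix:
`s_n(A) = inf_{‖x‖₂ = 1} ‖Ax‖₂`. -/
def smin {n : ℕ} (A : Matrix (Fin n) (Fin n) ℝ) : ℝ :=
  sInf {r | ∃ x : Fin n → ℝ, euclNorm x = 1 ∧ r = euclNorm (A.mulVec x)}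

/-- The singular values of an m×n matrix (m ≤ n intended): the square roots of the
eigenvalues of `A * Aᵀ`. -/
def svals {m n : ℕ} (A : Matrix (Fin m) (Fin n) ℝ) : Fin m → ℝ :=
  fun i => Real.sqrt ((Matrix.isHermitian_mul_conjTranspose_self A).eigenvalues i)

/-- The `K`-rank of an m×n matrix: the number of its singular values of size at least `K√n`. -/
def kRank {m n : ℕ} (K : ℝ) (A : Matrix (Fin m) (Fin n) ℝ) : ℕ :=
  (Finset.univ.filter (fun i => K * Real.sqrt n ≤ svals A i)).card

/-- The operator (spectral) norm of a matrix, via Euclidean spaces. -/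
def specNorm {m n : ℕ} (A : Matrix (Fin m) (Fin n) ℝ) : ℝ :=
  ‖LinearMap.toContinuousLinearMap (Matrix.toEuclideanLin A)‖

/-- The Hilbert–Schmidt (Frobenius) norm of a matrix. -/
def frobNorm {m n : ℕ} (A : Matrix (Fin m) (Fin n) ℝ) : ℝ :=
  Real.sqrt (∑ i, ∑ j, A i j ^ 2)

/-- The least common denominator `LCD_{α,γ}(v)`. -/
def LCD {N : ℕ} (α γ : ℝ) (v : Fin N → ℝ) : ℝ :=
  sInf {θ : ℝ | 0 < θ ∧ ∃ p : Fin N → ℤ,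
    euclNorm (θ • v - fun i => (p i : ℝ)) < min (γ * euclNorm (θ • v)) α}

/-- A vector is `δ`-sparse if it has at most `δN` nonzero coordinates. -/
def IsSparse {N : ℕ} (δ : ℝ) (x : Fin N → ℝ) : Prop :=
  ((Finset.univ.filter (fun i => x i ≠ 0)).card : ℝ) ≤ δ * N

/-- Compressible unit vectors: within distance `ρ` of a `δ`-sparse vector. -/
def Comp {N : ℕ} (δ ρ : ℝ) (x : Fin N → ℝ) : Prop :=
  euclNorm x = 1 ∧ ∃ y : Fin N → ℝ, IsSparse δ y ∧ euclNorm (x - y) ≤ ρ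

/-- Incompressible unit vectors. -/
def Incomp {N : ℕ} (δ ρ : ℝ) (x : Fin N → ℝ) : Prop :=
  euclNorm x = 1 ∧ ¬ Comp δ ρ x

/-- A real random variable is lazy Rademacher if it takes the value 0 with probability 1/2
and the values 1 and -1 with probability 1/4 each. -/
def IsLazyRademacher {Ω : Type*} [MeasurableSpace Ω] (μ : Measure Ω) (X : Ω → ℝ) : Prop :=
  Measurable X ∧ μ {ω | X ω = 0} = 1/2 ∧ μ {ω | X ω = 1} = 1/4 ∧ μ {ω | X ω = -1} = 1/4

/-- `X` has sub-Gaussian norm at most `s`, i.e. `E[exp(X²/s²)] ≤ 2`. -/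
def HasSubgaussianNormLE {Ω : Type*} [MeasurableSpace Ω] (μ : Measure Ω) (X : Ω → ℝ)
    (s : ℝ) : Prop :=
  Integrable (fun ω => Real.exp (X ω ^ 2 / s ^ 2)) μ ∧
    (∫ ω, Real.exp (X ω ^ 2 / s ^ 2) ∂μ) ≤ 2

/-- The entries of the random matrix `M` are i.i.d. copies of `ξ`. -/
def IIDEntries {Ω : Type*} [MeasurableSpace Ω] (μ : Measure Ω) {m n : ℕ}
    (M : Ω → Matrix (Fin m) (Fin n) ℝ) (ξ : Ω → ℝ) : Prop :=
  iIndepFun (fun (p : Fin m × Fin n) ω => M ω p.1 p.2) μ ∧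
    ∀ i j, IdentDistrib (fun ω => M ω i j) ξ μ μ

/-- The (n−1)×n matrix consisting of the first n−1 rows of an n×n matrix. -/
def firstRows {n : ℕ} (A : Matrix (Fin n) (Fin n) ℝ) : Matrix (Fin (n-1)) (Fin n) ℝ :=
  Matrix.submatrix A (Fin.castLE (Nat.sub_le n 1)) id

end

/-- The Borel/pi measurable structure on matrices (entrywise). -/
noncomputable instance matrixMeasurableSpace {m n α : Type*} [MeasurableSpace α] :
    MeasurableSpace (Matrix m n α) :=
  inferInstanceAs (MeasurableSpace (m → n → α))

noncomputable section

lemma euclNorm_eq_norm_toE {m : ℕ} (v : Fin m → ℝ) : euclNorm v = ‖toE v‖ := by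
  simp [euclNorm, toE, EuclideanSpace.norm_eq, Real.norm_eq_abs, sq_abs]

lemma toE_mulVec {n : ℕ} (A : Matrix (Fin n) (Fin n) ℝ) (x : Fin n → ℝ) :
    toE (A.mulVec x) = ∑ j, x j • toE (fun i => A i j) := by
  ext i
  simp [toE, Matrix.mulVec, dotProduct, PiLp.smul_apply, mul_comm]

lemma infDist_smul_ge {E : Type*} [NormedAddCommGroup E] [NormedSpace ℝ E] [ProperSpace E]
    (W : Submodule ℝ E) (hW : IsClosed (W : Set E)) (c : ℝ) (hc : c ≠ 0) (v : E) :
    |c| * Metric.infDist v W ≤ Metric.infDist (c • v) (W : Set E) := by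
  obtain ⟨y, hyW, hy⟩ := hW.exists_infDist_eq_dist ⟨0, W.zero_mem⟩ (c • v)
  have h1 : Metric.infDist v W ≤ dist v (c⁻¹ • y) :=
    Metric.infDist_le_dist_of_mem (W.smul_mem _ hyW)
  calc |c| * Metric.infDist v W ≤ |c| * dist v (c⁻¹ • y) :=
        mul_le_mul_of_nonneg_left h1 (abs_nonneg c)
    _ = dist (c • v) (c • c⁻¹ • y) := by rw [dist_smul₀]; simp [Real.norm_eq_abs]
    _ = Metric.infDist (c • v) W := by rw [smul_inv_smul₀ hc, hy]

/-- Every incompressible vector has more than `δn` coordinates of size `> ρ/√n`. -/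
lemma spread_of_incomp {n : ℕ} (hn : 0 < n) {δ ρ : ℝ} (hρ0 : 0 < ρ)
    {x : Fin n → ℝ} (hx : Incomp δ ρ x) :
    δ * n < ((Finset.univ.filter (fun k : Fin n => ρ / Real.sqrt n < |x k|)).card : ℝ) := by
  by_contra h
  push_neg at h
  set T := Finset.univ.filter (fun k : Fin n => ρ / Real.sqrt n < |x k|) with hT
  apply hx.2
  refine ⟨hx.1, fun k => if k ∈ T then x k else 0, ?_, ?_⟩
  · refine le_trans ?_ h
    exact_mod_cast Finset.card_le_card (by
      intro k hk
      simp only [Finset.mem_filter, Finset.mem_univ, true_and] at hk ⊢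
      by_contra hkT
      simp [hkT] at hk)
  · have hsn : (0:ℝ) < Real.sqrt n := Real.sqrt_pos.2 (by exact_mod_cast hn)
    have hbound : ∀ k : Fin n, ((x - fun k => if k ∈ T then x k else 0) k) ^ 2 ≤ ρ ^ 2 / n := by
      intro k
      by_cases hk : k ∈ T
      · simp [hk]
        positivity
      · have hk' : |x k| ≤ ρ / Real.sqrt n := by
          simp only [hT, Finset.mem_filter, Finset.mem_univ, true_and, not_lt] at hk
          exact hk
        have : (x k) ^ 2 ≤ (ρ / Real.sqrt n) ^ 2 := by
          rw [← sq_abs]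
          exact pow_le_pow_left₀ (abs_nonneg _) hk' 2
        simpa [hk, div_pow, Real.sq_sqrt (Nat.cast_nonneg n)] using this
    have hsum : ∑ k, ((x - fun k => if k ∈ T then x k else 0) k) ^ 2 ≤ ρ ^ 2 := by
      calc ∑ k, ((x - fun k => if k ∈ T then x k else 0) k) ^ 2
          ≤ ∑ _k : Fin n, ρ ^ 2 / n := Finset.sum_le_sum (fun k _ => hbound k)
        _ = n * (ρ ^ 2 / n) := by simp [mul_comm]
        _ = ρ ^ 2 := by field_simp
    calc euclNorm (x - fun k => if k ∈ T then x k else 0)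
        ≤ Real.sqrt (ρ ^ 2) := Real.sqrt_le_sqrt hsum
      _ = ρ := by rw [Real.sqrt_sq hρ0.le]

/-- Deterministic key lemma. -/
lemma det_key {n : ℕ} (hn : 0 < n) (A : Matrix (Fin n) (Fin n) ℝ) {δ ρ ε : ℝ}
    (hδ : δ ∈ Set.Ioo (0:ℝ) 1) (hρ : ρ ∈ Set.Ioo (0:ℝ) 1) (hε : 0 ≤ ε)
    (hE : ⨅ x : {x : Fin n → ℝ // Incomp δ ρ x},
        ENNReal.ofReal (euclNorm (A.mulVec x)) ≤ ENNReal.ofReal (ε * ρ / Real.sqrt n)) :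
    δ * n ≤ ((Finset.univ.filter (fun k : Fin n =>
      Metric.infDist (toE (fun i => A i k))
        (Submodule.span ℝ {y : EuclideanSpace ℝ (Fin n) |
          ∃ j : Fin n, j ≠ k ∧ y = toE (fun i => A i j)} : Set (EuclideanSpace ℝ (Fin n)))
        ≤ ε)).card : ℝ) := by
  set W : Fin n → Submodule ℝ (EuclideanSpace ℝ (Fin n)) := fun k =>
    Submodule.span ℝ {y : EuclideanSpace ℝ (Fin n) | ∃ j : Fin n, j ≠ k ∧ y = toE (fun i => A i j)}
    with hW
  set S := Finset.univ.filter (fun k : Fin n =>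
    Metric.infDist (toE (fun i => A i k)) (W k : Set (EuclideanSpace ℝ (Fin n))) ≤ ε) with hS
  by_contra h
  push_neg at h
  have hsn : (0:ℝ) < Real.sqrt n := Real.sqrt_pos.2 (by exact_mod_cast hn)
  -- S^c is nonempty
  have hcardn : (S.card : ℝ) < n := lt_trans h (by
    calc δ * n < 1 * n := by
          exact mul_lt_mul_of_pos_right hδ.2 (by exact_mod_cast hn)
      _ = n := one_mul _)
  have hScne : (Sᶜ : Finset (Fin n)).Nonempty := by
    rw [← Finset.card_pos, Finset.card_compl]
    have : S.card < n := by exact_mod_cast hcardn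
    simpa using Nat.sub_pos_of_lt (by simpa using this)
  set d := Sᶜ.inf' hScne (fun k => Metric.infDist (toE (fun i => A i k)) (W k : Set _)) with hd
  have hεd : ε < d := by
    rw [hd, Finset.lt_inf'_iff]
    intro k hk
    simp only [Finset.mem_compl, hS, Finset.mem_filter, Finset.mem_univ, true_and, not_le] at hk
    exact hk
  -- lower bound on ‖Ax‖ for all incompressible x
  have hlow : ∀ x : {x : Fin n → ℝ // Incomp δ ρ x},
      ρ / Real.sqrt n * d ≤ euclNorm (A.mulVec x) := by
    rintro ⟨x, hx⟩
    obtain ⟨k, hkT, hkS⟩ : ∃ k : Fin n, ρ / Real.sqrt n < |x k| ∧ k ∉ S := by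
      have hcard := spread_of_incomp hn hρ.1 hx
      by_contra hc
      push_neg at hc
      have hsub : (Finset.univ.filter (fun k : Fin n => ρ / Real.sqrt n < |x k|)) ⊆ S := by
        intro k hk
        simp only [Finset.mem_filter, Finset.mem_univ, true_and] at hk
        exact hc k hk
      have := Finset.card_le_card hsub
      have : ((Finset.univ.filter (fun k : Fin n => ρ / Real.sqrt n < |x k|)).card : ℝ)
          ≤ (S.card : ℝ) := by exact_mod_cast this
      linarith
    have hxk0 : x k ≠ 0 := by
      intro h0
      rw [h0] at hkT
      simp only [abs_zero] at hkT
      exact absurd hkT (not_lt.2 (div_nonneg hρ.1.le hsn.le))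
    have hWclosed : IsClosed ((W k : Set (EuclideanSpace ℝ (Fin n)))) :=
      Submodule.closed_of_finiteDimensional _
    have hmem : -(∑ j ∈ Finset.univ.erase k, x j • toE (fun i => A i j)) ∈ W k := by
      refine Submodule.neg_mem _ (Submodule.sum_mem _ fun j hj => ?_)
      refine Submodule.smul_mem _ _ (Submodule.subset_span ?_)
      exact ⟨j, Finset.ne_of_mem_erase hj, rfl⟩
    have hdk : d ≤ Metric.infDist (toE (fun i => A i k)) (W k : Set _) :=
      Finset.inf'_le _ (Finset.mem_compl.2 hkS)
    have key : Metric.infDist (x k • toE (fun i => A i k)) (W k : Set _)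
        ≤ euclNorm (A.mulVec x) := by
      rw [euclNorm_eq_norm_toE, toE_mulVec]
      calc Metric.infDist (x k • toE (fun i => A i k)) (W k : Set _)
          ≤ dist (x k • toE (fun i => A i k))
            (-(∑ j ∈ Finset.univ.erase k, x j • toE (fun i => A i j))) :=
            Metric.infDist_le_dist_of_mem hmem
        _ = ‖x k • toE (fun i => A i k) + ∑ j ∈ Finset.univ.erase k, x j • toE (fun i => A i j)‖ := by
            rw [dist_eq_norm, sub_neg_eq_add]
        _ = ‖∑ j, x j • toE (fun i => A i j)‖ := by
            congr 1
            exact Finset.add_sum_erase Finset.univ (fun j => x j • toE (fun i => A i j)) (Finset.mem_univ k)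
    have hsmul := infDist_smul_ge (W k) hWclosed (x k) hxk0 (toE (fun i => A i k))
    have hd0 : 0 ≤ d := le_trans hε hεd.le
    calc ρ / Real.sqrt n * d ≤ |x k| * Metric.infDist (toE (fun i => A i k)) (W k : Set _) := by
          apply mul_le_mul hkT.le (le_trans hdk (le_refl _)) hd0 (abs_nonneg _)
      _ ≤ Metric.infDist (x k • toE (fun i => A i k)) (W k : Set _) := hsmul
      _ ≤ euclNorm (A.mulVec x) := key
  have hInf : ENNReal.ofReal (ρ / Real.sqrt n * d) ≤
      ⨅ x : {x : Fin n → ℝ // Incomp δ ρ x},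
        ENNReal.ofReal (euclNorm (A.mulVec x)) :=
    le_iInf fun x => ENNReal.ofReal_le_ofReal (hlow x)
  have : ρ / Real.sqrt n * d ≤ ε * ρ / Real.sqrt n := by
    rw [← ENNReal.ofReal_le_ofReal_iff (div_nonneg (mul_nonneg hε hρ.1.le) hsn.le)]
    exact le_trans hInf hE
  have h2 : ρ / Real.sqrt n * d ≤ ρ / Real.sqrt n * ε := by
    calc ρ / Real.sqrt n * d ≤ ε * ρ / Real.sqrt n := this
      _ = ρ / Real.sqrt n * ε := by ring
  have hρn : (0:ℝ) < ρ / Real.sqrt n := div_pos hρ.1 hsn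
  have := le_of_mul_le_mul_left h2 hρn
  linarith

end

/-- invertibility via distance of columns to the spans of the other columns. -/
theorem invertibility_via_distance {n : ℕ} {Ω : Type*} [MeasurableSpace Ω]
    (μ : Measure Ω) [IsProbabilityMeasure μ]
    (A : Ω → Matrix (Fin n) (Fin n) ℝ) (hA : Measurable A)
    (δ ρ : ℝ) (hδ : δ ∈ Set.Ioo (0:ℝ) 1) (hρ : ρ ∈ Set.Ioo (0:ℝ) 1)
    (ε : ℝ) (hε : 0 ≤ ε) :
    μ {ω | ⨅ x : {x : Fin n → ℝ // Incomp δ ρ x},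
            ENNReal.ofReal (euclNorm ((A ω).mulVec x)) ≤
          ENNReal.ofReal (ε * ρ / Real.sqrt n)} ≤
      ENNReal.ofReal (1 / (δ * n)) *
        ∑ k : Fin n, μ {ω | Metric.infDist (toE (fun i => A ω i k))
          (Submodule.span ℝ {y : EuclideanSpace ℝ (Fin n) |
            ∃ j : Fin n, j ≠ k ∧ y = toE (fun i => A ω i j)} : Set (EuclideanSpace ℝ (Fin n)))
          ≤ ε} := by
  classical
  rcases Nat.eq_zero_or_pos n with hn | hn
  · subst hn
    have hempty : IsEmpty {x : Fin 0 → ℝ // Incomp δ ρ x} := by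
      constructor
      rintro ⟨x, hx⟩
      have := hx.1
      simp [euclNorm] at this
    have hset : {ω | ⨅ x : {x : Fin 0 → ℝ // Incomp δ ρ x},
        ENNReal.ofReal (euclNorm ((A ω).mulVec x)) ≤
        ENNReal.ofReal (ε * ρ / Real.sqrt ((0:ℕ):ℝ))} = ∅ := by
      ext ω
      simp only [Set.mem_setOf_eq, iInf_of_empty, Set.mem_empty_iff_false, iff_false]
      exact (ENNReal.ofReal_lt_top).not_ge
    rw [hset, measure_empty]
    exact zero_le
  · set Sset : Fin n → Set Ω := fun k => {ω | Metric.infDist (toE (fun i => A ω i k))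
      (Submodule.span ℝ {y : EuclideanSpace ℝ (Fin n) |
        ∃ j : Fin n, j ≠ k ∧ y = toE (fun i => A ω i j)} : Set (EuclideanSpace ℝ (Fin n)))
      ≤ ε} with hSset
    set M : Fin n → Set Ω := fun k => toMeasurable μ (Sset k) with hM
    have hMmeas : ∀ k, MeasurableSet (M k) := fun k => measurableSet_toMeasurable μ _
    set f : Ω → ℝ≥0∞ := fun ω => ∑ k, (M k).indicator (fun _ => (1:ℝ≥0∞)) ω with hf
    have hfmeas : Measurable f :=
      Finset.measurable_sum _ (fun k _ => measurable_const.indicator (hMmeas k))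
    have hδn : (0:ℝ) < δ * n := mul_pos hδ.1 (by exact_mod_cast hn)
    have hsubset : {ω | ⨅ x : {x : Fin n → ℝ // Incomp δ ρ x},
          ENNReal.ofReal (euclNorm ((A ω).mulVec x)) ≤
        ENNReal.ofReal (ε * ρ / Real.sqrt n)} ⊆
        {ω | ENNReal.ofReal (δ * n) ≤ f ω} := by
      intro ω hω
      have hdet := det_key hn (A ω) hδ hρ hε hω
      have h1 : (Finset.univ.filter (fun k : Fin n =>
          Metric.infDist (toE (fun i => A ω i k))
            (Submodule.span ℝ {y : EuclideanSpace ℝ (Fin n) |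
              ∃ j : Fin n, j ≠ k ∧ y = toE (fun i => A ω i j)} : Set (EuclideanSpace ℝ (Fin n)))
            ≤ ε)).card ≤ (Finset.univ.filter (fun k : Fin n => ω ∈ M k)).card := by
        apply Finset.card_le_card
        intro k hk
        simp only [Finset.mem_filter, Finset.mem_univ, true_and] at hk ⊢
        exact subset_toMeasurable μ (Sset k) hk
      have h2 : f ω = ((Finset.univ.filter (fun k : Fin n => ω ∈ M k)).card : ℝ≥0∞) := by
        simp [hf, Set.indicator_apply, Finset.sum_boole]
      rw [Set.mem_setOf_eq, h2, ← ENNReal.ofReal_natCast]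
      apply ENNReal.ofReal_le_ofReal
      exact le_trans hdet (by exact_mod_cast h1)
    have markov := mul_meas_ge_le_lintegral₀ (μ := μ) hfmeas.aemeasurable
      (ENNReal.ofReal (δ * n))
    have hlint : ∫⁻ ω, f ω ∂μ = ∑ k : Fin n, μ (Sset k) := by
      rw [hf]
      rw [lintegral_finset_sum _ (fun k _ => measurable_const.indicator (hMmeas k))]
      refine Finset.sum_congr rfl fun k _ => ?_
      have hone : ∫⁻ a, (M k).indicator (fun _ => (1:ℝ≥0∞)) a ∂μ = μ (M k) :=
        lintegral_indicator_one (hMmeas k)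
      rw [hone]
      exact measure_toMeasurable _
    have ha0 : ENNReal.ofReal (δ * n) ≠ 0 := by
      simp [ENNReal.ofReal_eq_zero, not_le, hδn]
    have haT : ENNReal.ofReal (δ * n) ≠ ⊤ := ENNReal.ofReal_ne_top
    have hinv : ENNReal.ofReal (1 / (δ * n)) = (ENNReal.ofReal (δ * n))⁻¹ := by
      rw [one_div, ENNReal.ofReal_inv_of_pos hδn]
    calc μ {ω | ⨅ x : {x : Fin n → ℝ // Incomp δ ρ x},
            ENNReal.ofReal (euclNorm ((A ω).mulVec x)) ≤
          ENNReal.ofReal (ε * ρ / Real.sqrt n)}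
        ≤ μ {ω | ENNReal.ofReal (δ * n) ≤ f ω} := measure_mono hsubset
      _ = (ENNReal.ofReal (δ * n))⁻¹ *
          (ENNReal.ofReal (δ * n) * μ {ω | ENNReal.ofReal (δ * n) ≤ f ω}) := by
          rw [← mul_assoc, ENNReal.inv_mul_cancel ha0 haT, one_mul]
      _ ≤ (ENNReal.ofReal (δ * n))⁻¹ * ∫⁻ ω, f ω ∂μ :=
          mul_le_mul_right markov _
      _ = ENNReal.ofReal (1 / (δ * n)) * ∑ k : Fin n, μ (Sset k) := by
          rw [hinv, hlint]
end

section
/- Fix δ, ρ ∈ (0,1). There exist γ ∈ (0,1) and λ > 0, depending only on δ and ρ, such that for every N, every v ∈ Incomp_N(δ,ρ), and every α > 0, one has LCD_{α,γ}(v) ≥ λ√N. -/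
open MeasureTheory ProbabilityTheory Matrix
open scoped ENNReal

section Aux

/-- Simultaneous Dirichlet approximation via pigeonhole. -/
private lemma dirichlet_sim {N : ℕ} (v : Fin N → ℝ) {ε : ℝ} (hε : 0 < ε) :
    ∃ q : ℕ, 0 < q ∧ ∃ p : Fin N → ℤ, ∀ i, |(q : ℝ) * v i - (p i : ℝ)| < ε := by
  set Q : ℕ := ⌈1/ε⌉₊ + 1 with hQdef
  have hQpos : (0:ℝ) < Q := by positivity
  have hQε : 1/(Q:ℝ) < ε := by
    rw [div_lt_iff₀ hQpos]
    have h1 : 1/ε < (Q:ℝ) := by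
      refine lt_of_le_of_lt (Nat.le_ceil _) ?_
      exact_mod_cast Nat.lt_succ_self _
    calc (1:ℝ) = (1/ε) * ε := by field_simp
      _ < (Q:ℝ) * ε := by exact mul_lt_mul_of_pos_right h1 hε
      _ = ε * Q := by ring
  have hmem : ∀ (k : ℕ) (i : Fin N), (⌊(Q:ℝ) * Int.fract ((k:ℝ) * v i)⌋).toNat < Q := by
    intro k i
    have h1 : (Q:ℝ) * Int.fract ((k:ℝ) * v i) < Q :=
      mul_lt_of_lt_one_right hQpos (Int.fract_lt_one _)
    have h2 : ⌊(Q:ℝ) * Int.fract ((k:ℝ) * v i)⌋ < (Q:ℤ) := by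
      rw [Int.floor_lt]; exact_mod_cast h1
    omega
  set f : Fin (Q^N + 1) → (Fin N → Fin Q) :=
    fun k i => ⟨(⌊(Q:ℝ) * Int.fract (((k:ℕ):ℝ) * v i)⌋).toNat, hmem k i⟩ with hf
  have hcard : Fintype.card (Fin N → Fin Q) < Fintype.card (Fin (Q^N + 1)) := by
    simp [Fintype.card_fun]
  obtain ⟨a, b, hne, hfe⟩ := Fintype.exists_ne_map_eq_of_card_lt f hcard
  have key : ∀ a b : Fin (Q^N + 1), (a:ℕ) < (b:ℕ) → f a = f b →
      ∃ q : ℕ, 0 < q ∧ ∃ p : Fin N → ℤ, ∀ i, |(q : ℝ) * v i - (p i : ℝ)| < ε := by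
    intro a b hab hfe
    refine ⟨(b:ℕ) - (a:ℕ), by omega,
      fun i => ⌊((b:ℕ):ℝ) * v i⌋ - ⌊((a:ℕ):ℝ) * v i⌋, fun i => ?_⟩
    have hfloor : ⌊(Q:ℝ) * Int.fract (((a:ℕ):ℝ) * v i)⌋
        = ⌊(Q:ℝ) * Int.fract (((b:ℕ):ℝ) * v i)⌋ := by
      have h1 := congrArg Fin.val (congrFun hfe i)
      simp only [hf] at h1
      have ha0 : 0 ≤ ⌊(Q:ℝ) * Int.fract (((a:ℕ):ℝ) * v i)⌋ :=
        Int.floor_nonneg.mpr (mul_nonneg hQpos.le (Int.fract_nonneg _))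
      have hb0 : 0 ≤ ⌊(Q:ℝ) * Int.fract (((b:ℕ):ℝ) * v i)⌋ :=
        Int.floor_nonneg.mpr (mul_nonneg hQpos.le (Int.fract_nonneg _))
      omega
    set x := Int.fract (((a:ℕ):ℝ) * v i) with hx
    set y := Int.fract (((b:ℕ):ℝ) * v i) with hy
    have hxy : |y - x| < 1/Q := by
      have hx1 : ((⌊(Q:ℝ)*x⌋ : ℤ) : ℝ) ≤ (Q:ℝ)*x := Int.floor_le _
      have hx2 : (Q:ℝ)*x < (⌊(Q:ℝ)*x⌋ : ℤ) + 1 := Int.lt_floor_add_one _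
      have hy1 : ((⌊(Q:ℝ)*y⌋ : ℤ) : ℝ) ≤ (Q:ℝ)*y := Int.floor_le _
      have hy2 : (Q:ℝ)*y < (⌊(Q:ℝ)*y⌋ : ℤ) + 1 := Int.lt_floor_add_one _
      rw [hfloor] at hx1 hx2
      rw [lt_div_iff₀ hQpos]
      calc |y - x| * (Q:ℝ) = |(y - x) * (Q:ℝ)| := by rw [abs_mul, abs_of_pos hQpos]
        _ < 1 := by rw [abs_lt]; constructor <;> nlinarith
    have hexp : ((((b:ℕ) - (a:ℕ) : ℕ)):ℝ) * v i
        - ((⌊((b:ℕ):ℝ) * v i⌋ - ⌊((a:ℕ):ℝ) * v i⌋ : ℤ) : ℝ) = y - x := by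
      rw [hx, hy, Int.fract, Int.fract, Nat.cast_sub hab.le]
      push_cast
      ring
    rw [hexp]
    exact hxy.trans hQε
  rcases lt_or_gt_of_ne hne with h | h
  · exact key a b h hfe
  · exact key b a h hfe.symm

private lemma euclNorm_smul_unit {N : ℕ} {v : Fin N → ℝ} (hv : ∑ i, v i ^ 2 = 1)
    {θ : ℝ} (hθ : 0 ≤ θ) : euclNorm (θ • v) = θ := by
  unfold euclNorm
  have : ∑ i, (θ • v) i ^ 2 = θ ^ 2 * ∑ i, v i ^ 2 := by
    rw [Finset.mul_sum]
    exact Finset.sum_congr rfl fun i _ => by simp [mul_pow]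
  rw [this, hv, mul_one, Real.sqrt_sq hθ]

end Aux

/-- lower bound on the LCD of incompressible vectors. -/
theorem lcd_lower_bound :
    ∀ δ ∈ Set.Ioo (0:ℝ) 1, ∀ ρ ∈ Set.Ioo (0:ℝ) 1,
    ∃ γ ∈ Set.Ioo (0:ℝ) 1, ∃ lam > (0:ℝ),
      ∀ (N : ℕ) (v : Fin N → ℝ), Incomp δ ρ v → ∀ α > (0:ℝ),
        lam * Real.sqrt N ≤ LCD α γ v := by
  intro δ hδ ρ hρ
  obtain ⟨hδ0, hδ1⟩ := hδ
  obtain ⟨hρ0, hρ1⟩ := hρ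
  refine ⟨ρ, ⟨hρ0, hρ1⟩, Real.sqrt δ / 2, by positivity, ?_⟩
  intro N v hv α hα
  obtain ⟨hv1, hvc⟩ := hv
  have hsum : ∑ i, v i ^ 2 = 1 := by
    have h0 : (0:ℝ) ≤ ∑ i, v i ^ 2 := by positivity
    have h1 := congrArg (· ^ 2) hv1
    simpa [euclNorm, Real.sq_sqrt h0] using h1
  have hN : 0 < N := by
    rcases Nat.eq_zero_or_pos N with h | h
    · subst h; simp at hsum
    · exact h
  have hδN : 0 < δ * N := by positivity
  have hsδN : 0 < Real.sqrt (δ * N) := Real.sqrt_pos.mpr hδN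
  set A : Finset (Fin N) := Finset.univ.filter (fun i => 1 < |v i| * Real.sqrt (δ * N)) with hA
  set w : Fin N → ℝ := fun i => if i ∈ A then 0 else v i with hw
  set S : ℝ := ∑ i, w i ^ 2 with hS
  -- cardinality bound for A
  have hAcard : (A.card : ℝ) ≤ δ * N := by
    have hterm : ∀ i ∈ A, (1:ℝ)/(δ*N) ≤ v i ^ 2 := by
      intro i hi
      rw [hA, Finset.mem_filter] at hi
      have h1 : 1 < |v i| * Real.sqrt (δ*N) := hi.2
      have hs : Real.sqrt (δ*N) ^ 2 = δ*N := Real.sq_sqrt hδN.le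
      rw [div_le_iff₀ hδN]
      nlinarith [sq_abs (v i), abs_nonneg (v i), Real.sqrt_nonneg (δ*N)]
    have hsumA : (A.card : ℝ) * (1/(δ*N)) ≤ ∑ i ∈ A, v i ^ 2 := by
      have := Finset.card_nsmul_le_sum A (fun i => v i ^ 2) (1/(δ*N)) hterm
      simpa [nsmul_eq_mul] using this
    have hsA : ∑ i ∈ A, v i ^ 2 ≤ 1 := by
      rw [← hsum]
      exact Finset.sum_le_sum_of_subset_of_nonneg (Finset.subset_univ A)
        (fun i _ _ => by positivity)
    have h2 : (A.card : ℝ) / (δ*N) ≤ 1 := by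
      rw [div_eq_mul_one_div]; exact hsumA.trans hsA
    exact (div_le_one hδN).mp h2
  -- incompressibility: mass outside A exceeds ρ²
  have hfar : ρ ^ 2 < S := by
    by_contra hle
    push_neg at hle
    apply hvc
    refine ⟨hv1, fun i => if i ∈ A then v i else 0, ?_, ?_⟩
    · unfold IsSparse
      refine le_trans ?_ hAcard
      have hsub : Finset.univ.filter
          (fun i => (if i ∈ A then v i else 0) ≠ 0) ⊆ A := by
        intro i hi
        rw [Finset.mem_filter] at hi
        by_contra hiA
        exact hi.2 (if_neg hiA)
      exact_mod_cast Finset.card_le_card hsub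
    · have hve : (v - fun i => if i ∈ A then v i else 0) = w := by
        funext i
        by_cases hi : i ∈ A <;> simp [hw, hi]
      rw [hve]
      unfold euclNorm
      rw [← hS]
      calc Real.sqrt S ≤ Real.sqrt (ρ^2) := Real.sqrt_le_sqrt hle
        _ = ρ := Real.sqrt_sq hρ0.le
  -- now bound the infimum
  unfold LCD
  apply le_csInf
  · -- nonemptiness via Dirichlet
    have hNs : (0:ℝ) < Real.sqrt N := Real.sqrt_pos.mpr (by exact_mod_cast hN)
    have hmin : 0 < min ρ α := lt_min hρ0 hα
    obtain ⟨q, hq, p, hp⟩ := dirichlet_sim v (show 0 < min ρ α / Real.sqrt N by positivity)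
    have hq1 : (1:ℝ) ≤ (q:ℝ) := by exact_mod_cast hq
    refine ⟨(q:ℝ), by exact_mod_cast hq, p, ?_⟩
    have happ : ∀ i, ((q:ℝ) • v - fun i => (p i : ℝ)) i = (q:ℝ) * v i - p i := by
      intro i; simp
    have hsumlt : ∑ i, (((q:ℝ) • v - fun i => (p i : ℝ)) i) ^ 2
        < N * (min ρ α / Real.sqrt N) ^ 2 := by
      have hcard : (Finset.univ : Finset (Fin N)).Nonempty := ⟨⟨0, hN⟩, Finset.mem_univ _⟩
      calc ∑ i, (((q:ℝ) • v - fun i => (p i : ℝ)) i) ^ 2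
          < ∑ _i : Fin N, (min ρ α / Real.sqrt N) ^ 2 := by
            refine Finset.sum_lt_sum_of_nonempty hcard fun i _ => ?_
            rw [happ i, ← sq_abs]
            exact pow_lt_pow_left₀ (hp i) (abs_nonneg _) (by norm_num)
        _ = N * (min ρ α / Real.sqrt N) ^ 2 := by
            rw [Finset.sum_const, Finset.card_univ, Fintype.card_fin, nsmul_eq_mul]
    have hnormq : euclNorm ((q:ℝ) • v) = (q:ℝ) := euclNorm_smul_unit hsum (by positivity)
    have hlt2 : euclNorm ((q:ℝ) • v - fun i => (p i : ℝ)) < min ρ α := by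
      unfold euclNorm
      have h0 : (0:ℝ) ≤ ∑ i, (((q:ℝ) • v - fun i => (p i : ℝ)) i) ^ 2 := by positivity
      calc Real.sqrt (∑ i, (((q:ℝ) • v - fun i => (p i : ℝ)) i) ^ 2)
          < Real.sqrt (N * (min ρ α / Real.sqrt N) ^ 2) := Real.sqrt_lt_sqrt h0 hsumlt
        _ = min ρ α := by
            rw [Real.sqrt_mul (by positivity), Real.sqrt_sq (by positivity)]
            field_simp
    refine hlt2.trans_le ?_
    rw [hnormq]
    exact le_min (le_trans (min_le_left _ _) (le_mul_of_one_le_right hρ0.le hq1))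
      (min_le_right _ _)
  · -- lower bound for every element of the set
    rintro θ ⟨hθ0, p, hp⟩
    by_contra hcon
    push_neg at hcon
    have hθsmall : θ < Real.sqrt (δ * N) / 2 := by
      rw [Real.sqrt_mul hδ0.le]
      calc θ < Real.sqrt δ / 2 * Real.sqrt N := hcon
        _ = Real.sqrt δ * Real.sqrt N / 2 := by ring
    have hnorm : euclNorm (θ • v) = θ := euclNorm_smul_unit hsum hθ0.le
    have hlt : euclNorm (θ • v - fun i => (p i : ℝ)) < ρ * θ := by
      refine lt_of_lt_of_le hp ?_
      rw [hnorm]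
      exact min_le_left _ _
    have happ : ∀ i, ((θ • v - fun i => (p i : ℝ)) i) = θ * v i - p i := by
      intro i; simp
    have hsq : ∑ i, (θ * v i - p i) ^ 2 < (ρ * θ) ^ 2 := by
      have h0 : (0:ℝ) ≤ ∑ i, (θ * v i - p i) ^ 2 := by positivity
      have h1 : Real.sqrt (∑ i, (θ * v i - p i) ^ 2) < ρ * θ := by
        unfold euclNorm at hlt
        calc Real.sqrt (∑ i, (θ * v i - p i) ^ 2)
            = Real.sqrt (∑ i, (((θ • v - fun i => (p i : ℝ)) i)) ^ 2) := by
              exact congrArg Real.sqrt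
                (Finset.sum_congr rfl fun i _ => by rw [happ i]).symm
          _ < ρ * θ := hlt
      calc ∑ i, (θ * v i - p i) ^ 2
          = Real.sqrt (∑ i, (θ * v i - p i) ^ 2) ^ 2 := (Real.sq_sqrt h0).symm
        _ < (ρ * θ) ^ 2 := pow_lt_pow_left₀ h1 (Real.sqrt_nonneg _) (by norm_num)
    have hptwise : ∀ i, θ ^ 2 * w i ^ 2 ≤ (θ * v i - p i) ^ 2 := by
      intro i
      by_cases hi : i ∈ A
      · have hw0 : w i = 0 := by simp [hw, hi]
        rw [hw0]
        nlinarith [sq_nonneg (θ * v i - p i)]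
      · have hwv : w i = v i := if_neg hi
        have hvi : |v i| * Real.sqrt (δ*N) ≤ 1 := by
          rw [hA] at hi
          simp only [Finset.mem_filter, Finset.mem_univ, true_and, not_lt] at hi
          exact hi
        have hsmall : |θ * v i| < 1/2 := by
          rw [abs_mul, abs_of_pos hθ0]
          nlinarith [mul_le_mul_of_nonneg_left hvi hθ0.le, abs_nonneg (v i)]
        have habs : |θ * v i| ≤ |θ * v i - p i| := by
          rcases eq_or_ne (p i) 0 with hp0 | hp0
          · simp [hp0]
          · have h1p : (1:ℝ) ≤ |(p i : ℝ)| := by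
              rw [← Int.cast_abs]
              exact_mod_cast Int.one_le_abs hp0
            have h2 := abs_sub_abs_le_abs_sub ((p i : ℝ)) (θ * v i)
            rw [abs_sub_comm] at h2
            linarith
        rw [hwv]
        calc θ ^ 2 * v i ^ 2 = |θ * v i| * |θ * v i| := by
              rw [abs_mul_abs_self]; ring
          _ ≤ |θ * v i - p i| * |θ * v i - p i| :=
              mul_self_le_mul_self (abs_nonneg _) habs
          _ = (θ * v i - p i) ^ 2 := by rw [abs_mul_abs_self]; ring
    have hlow : θ ^ 2 * S ≤ ∑ i, (θ * v i - p i) ^ 2 := by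
      rw [hS, Finset.mul_sum]
      exact Finset.sum_le_sum fun i _ => hptwise i
    nlinarith [mul_lt_mul_of_pos_left hfar (pow_pos hθ0 2)]
end

section
/- There exists an absolute constant C ≥ 1 such that for every n, every n-dimensional ellipsoid in ℝⁿ with semiaxes of lengths ℓ_1, …, ℓ_n can be covered by at most Cⁿ translates of the right-parallelepiped whose edge in the direction of the i-th semiaxis has width ℓ_i/√n for each i. -/
open MeasureTheory ProbabilityTheory Matrix
open scoped ENNReal

lemma aux_half_sum (m : ℕ) :
    ∑ j ∈ Finset.Icc (-(m:ℤ)) m, ((2:ℝ)⁻¹) ^ j.natAbs ≤ 3 - 2 * (2:ℝ)⁻¹ ^ m := by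
  induction m with
  | zero => norm_num
  | succ m ih =>
    have hins : Finset.Icc (-((m+1:ℕ):ℤ)) ((m+1:ℕ):ℤ) =
        insert (-((m+1:ℕ):ℤ)) (insert ((m+1:ℕ):ℤ) (Finset.Icc (-(m:ℤ)) m)) := by
      ext j
      simp only [Finset.mem_Icc, Finset.mem_insert]
      omega
    rw [hins, Finset.sum_insert, Finset.sum_insert]
    · have h1 : ((-((m+1:ℕ):ℤ)).natAbs) = m + 1 := by omega
      have h2 : (((m+1:ℕ):ℤ)).natAbs = m + 1 := by omega
      rw [h1, h2]
      have : ((2:ℝ)⁻¹) ^ (m+1) = (2:ℝ)⁻¹ ^ m * 2⁻¹ := pow_succ _ _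
      rw [this]
      linarith
    · simp only [Finset.mem_Icc]; omega
    · simp only [Finset.mem_insert, Finset.mem_Icc]; omega

lemma aux_exp_term (j : ℤ) : Real.exp (-(j:ℝ)^2) ≤ ((2:ℝ)⁻¹) ^ j.natAbs := by
  have h1 : ((j.natAbs : ℝ)) ≤ (j:ℝ)^2 := by
    have : (j:ℝ)^2 = ((j.natAbs:ℝ))^2 := by
      rw [Nat.cast_natAbs]
      push_cast
      rw [sq_abs]
    rw [this]
    have : j.natAbs ≤ j.natAbs ^ 2 := Nat.le_self_pow (by norm_num) _
    exact_mod_cast this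
  calc Real.exp (-(j:ℝ)^2) ≤ Real.exp (-(j.natAbs:ℝ)) := by
        apply Real.exp_le_exp.2; linarith
    _ = Real.exp (-1) ^ j.natAbs := by
        rw [← Real.exp_nat_mul]; ring_nf
    _ ≤ ((2:ℝ)⁻¹) ^ j.natAbs := by
        apply pow_le_pow_left₀ (Real.exp_nonneg _)
        rw [Real.exp_neg]
        apply inv_anti₀ (by norm_num)
        linarith [Real.add_one_le_exp (1:ℝ)]

lemma aux_exp_sum (m : ℕ) :
    ∑ j ∈ Finset.Icc (-(m:ℤ)) m, Real.exp (-(j:ℝ)^2) ≤ 3 := by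
  calc ∑ j ∈ Finset.Icc (-(m:ℤ)) m, Real.exp (-(j:ℝ)^2)
      ≤ ∑ j ∈ Finset.Icc (-(m:ℤ)) m, ((2:ℝ)⁻¹) ^ j.natAbs :=
        Finset.sum_le_sum fun j _ => aux_exp_term j
    _ ≤ 3 - 2 * (2:ℝ)⁻¹ ^ m := aux_half_sum m
    _ ≤ 3 := by nlinarith [pow_pos (by norm_num : (0:ℝ) < 2⁻¹) m]

lemma aux_count (n : ℕ) :
    (((Fintype.piFinset fun _ : Fin n => Finset.Icc (-(2*n:ℤ)) (2*n)).filter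
      (fun k : Fin n → ℤ => ∑ i, ((k i:ℝ))^2 ≤ 4*n)).card : ℝ)
      ≤ (3 * Real.exp 4) ^ n := by
  set Box := Fintype.piFinset fun _ : Fin n => Finset.Icc (-(2*n:ℤ)) (2*n) with hBox
  set K := Box.filter (fun k : Fin n → ℤ => ∑ i, ((k i:ℝ))^2 ≤ 4*n) with hK
  have step1 : (K.card : ℝ) ≤ ∑ k ∈ K, Real.exp (4*n) * ∏ i, Real.exp (-((k i:ℝ))^2) := by
    rw [Finset.card_eq_sum_ones K]
    push_cast
    apply Finset.sum_le_sum
    intro k hk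
    have hks : ∑ i, ((k i:ℝ))^2 ≤ 4*n := (Finset.mem_filter.1 hk).2
    have : Real.exp (4*n) * ∏ i, Real.exp (-((k i:ℝ))^2)
        = Real.exp (4*n - ∑ i, ((k i:ℝ))^2) := by
      rw [← Real.exp_sum, ← Real.exp_add]
      congr 1
      rw [sub_eq_add_neg, ← Finset.sum_neg_distrib]
    rw [this]
    calc (1:ℝ) = Real.exp 0 := (Real.exp_zero).symm
      _ ≤ _ := Real.exp_le_exp.2 (by linarith)
  have step2 : ∑ k ∈ K, Real.exp (4*n) * ∏ i, Real.exp (-((k i:ℝ))^2)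
      ≤ ∑ k ∈ Box, Real.exp (4*n) * ∏ i, Real.exp (-((k i:ℝ))^2) := by
    apply Finset.sum_le_sum_of_subset_of_nonneg (Finset.filter_subset _ _)
    intro k _ _
    positivity
  have step3 : ∑ k ∈ Box, Real.exp (4*n) * ∏ i, Real.exp (-((k i:ℝ))^2)
      = Real.exp (4*n) * ∏ _i : Fin n, ∑ j ∈ Finset.Icc (-(2*n:ℤ)) (2*n), Real.exp (-(j:ℝ)^2) := by
    rw [← Finset.mul_sum]
    congr 1
    rw [Finset.prod_univ_sum]
  have step4 : Real.exp (4*n) * ∏ _i : Fin n, ∑ j ∈ Finset.Icc (-(2*n:ℤ)) (2*n), Real.exp (-(j:ℝ)^2)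
      ≤ Real.exp (4*n) * 3 ^ n := by
    apply mul_le_mul_of_nonneg_left _ (Real.exp_nonneg _)
    calc ∏ _i : Fin n, ∑ j ∈ Finset.Icc (-(2*n:ℤ)) (2*n), Real.exp (-(j:ℝ)^2)
        ≤ ∏ _i : Fin n, (3:ℝ) := by
          apply Finset.prod_le_prod
          · intro i _; positivity
          · intro i _
            have := aux_exp_sum (2*n)
            simpa using this
      _ = 3 ^ n := by simp
  have : Real.exp (4*n) * 3 ^ n = (3 * Real.exp 4) ^ n := by
    rw [mul_pow, mul_comm]
    congr 1
    rw [← Real.exp_nat_mul]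
    ring_nf
  linarith

/-- any ellipsoid with semiaxes `ℓᵢ` can be covered by at most `Cⁿ` translates of
the box with widths `ℓᵢ/√n` along the semiaxes. -/
theorem ellipsoid_covering :
    ∃ C ≥ (1:ℝ), ∀ (n : ℕ) (u : Fin n → EuclideanSpace ℝ (Fin n)), Orthonormal ℝ u →
      ∀ ℓ : Fin n → ℝ, (∀ i, 0 < ℓ i) → ∀ x₀ : EuclideanSpace ℝ (Fin n),
      ∃ T : Finset (EuclideanSpace ℝ (Fin n)), (T.card : ℝ) ≤ C ^ n ∧
        {x : EuclideanSpace ℝ (Fin n) | ∑ i, (inner ℝ (x - x₀) (u i) : ℝ) ^ 2 / ℓ i ^ 2 ≤ 1} ⊆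
          ⋃ y ∈ T, {z : EuclideanSpace ℝ (Fin n) | ∃ t : Fin n → ℝ,
            (∀ i, 0 ≤ t i ∧ t i ≤ ℓ i / Real.sqrt n) ∧ z = y + ∑ i, t i • u i} := by
  classical
  refine ⟨3 * Real.exp 4, by nlinarith [Real.one_le_exp (by norm_num : (0:ℝ) ≤ 4)], ?_⟩
  intro n u hu ℓ hℓ x₀
  set s := Real.sqrt n with hs
  set K := ((Fintype.piFinset fun _ : Fin n => Finset.Icc (-(2*n:ℤ)) (2*n)).filter
      (fun k : Fin n → ℤ => ∑ i, ((k i:ℝ))^2 ≤ 4*n)) with hKdef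
  set T := K.image (fun k => x₀ + ∑ i, ((k i : ℝ) * ℓ i / s) • u i) with hTdef
  refine ⟨T, ?_, ?_⟩
  · calc (T.card : ℝ) ≤ (K.card : ℝ) := by exact_mod_cast Finset.card_image_le
      _ ≤ (3 * Real.exp 4) ^ n := aux_count n
  · -- coverage
    intro x hx
    simp only [Set.mem_setOf_eq] at hx
    set c : Fin n → ℝ := fun i => (inner ℝ (x - x₀) (u i) : ℝ) with hc
    have hterm : ∀ i, (c i)^2 / (ℓ i)^2 ≤ 1 := by
      intro i
      have h0 : ∀ j, j ∈ Finset.univ → 0 ≤ (c j)^2 / (ℓ j)^2 := by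
        intro j _; positivity
      have := Finset.single_le_sum h0 (Finset.mem_univ i)
      linarith
    set k : Fin n → ℤ := fun i => ⌊c i * s / ℓ i⌋ with hk
    -- basic floor bounds
    have hfl : ∀ i, (k i : ℝ) * ℓ i ≤ c i * s ∧ c i * s ≤ ((k i:ℝ)+1) * ℓ i := by
      intro i
      constructor
      · have := Int.floor_le (c i * s / ℓ i)
        rwa [le_div_iff₀ (hℓ i)] at this
      · have := (Int.lt_floor_add_one (c i * s / ℓ i)).le
        rwa [div_le_iff₀ (hℓ i)] at this
    have hs2 : s^2 = n := Real.sq_sqrt (Nat.cast_nonneg n)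
    have hz2 : ∀ i, (c i * s / ℓ i)^2 ≤ n := by
      intro i
      have : (c i * s / ℓ i)^2 = ((c i)^2/(ℓ i)^2) * n := by
        rw [div_pow, mul_pow, hs2]; ring
      rw [this]
      nlinarith [hterm i, Nat.cast_nonneg (α := ℝ) n]
    have hkK : k ∈ K := by
      rw [hKdef, Finset.mem_filter]
      constructor
      · rw [Fintype.mem_piFinset]
        intro i
        have hn1 : (1:ℝ) ≤ n := by exact_mod_cast i.pos
        have h1 : (k i : ℝ) ≤ c i * s / ℓ i := Int.floor_le _
        have h2 : c i * s / ℓ i - 1 ≤ (k i:ℝ) := by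
          linarith [Int.sub_one_lt_floor (c i * s / ℓ i)]
        have hzn := hz2 i
        rw [Finset.mem_Icc]
        constructor
        · have : -(2*(n:ℝ)) ≤ (k i : ℝ) := by
            nlinarith [sq_nonneg (c i * s / ℓ i + n)]
          exact_mod_cast this
        · have : (k i : ℝ) ≤ 2*(n:ℝ) := by
            nlinarith [sq_nonneg (c i * s / ℓ i - n)]
          exact_mod_cast this
      · have hper : ∀ i, ((k i:ℝ))^2 ≤ 2 * (c i * s / ℓ i)^2 + 2 := by
          intro i
          have h1 : (k i : ℝ) ≤ c i * s / ℓ i := Int.floor_le _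
          have h2 : c i * s / ℓ i - 1 ≤ (k i:ℝ) := by
            linarith [Int.sub_one_lt_floor (c i * s / ℓ i)]
          nlinarith [sq_nonneg (2*(c i * s / ℓ i) - (k i:ℝ)),
            mul_nonneg (by linarith : (0:ℝ) ≤ c i * s / ℓ i - (k i:ℝ))
              (by linarith : (0:ℝ) ≤ 1 - (c i * s / ℓ i - (k i:ℝ)))]
        calc ∑ i, ((k i:ℝ))^2 ≤ ∑ i, (2 * (c i * s / ℓ i)^2 + 2) :=
              Finset.sum_le_sum fun i _ => hper i
          _ = 2 * ∑ i, (c i * s / ℓ i)^2 + 2*n := by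
              rw [Finset.sum_add_distrib, ← Finset.mul_sum, Finset.sum_const, Finset.card_univ]
              simp [mul_comm]
          _ ≤ 2 * ∑ i, ((c i)^2/(ℓ i)^2 * n) + 2*n := by
              apply add_le_add_left
              apply mul_le_mul_of_nonneg_left _ (by norm_num)
              apply Finset.sum_le_sum
              intro i _
              have : (c i * s / ℓ i)^2 = ((c i)^2/(ℓ i)^2) * n := by
                rw [div_pow, mul_pow, hs2]; ring
              rw [this]
          _ = 2 * (∑ i, (c i)^2/(ℓ i)^2) * n + 2*n := by
              rw [← Finset.sum_mul]; ring
          _ ≤ 4*n := by nlinarith [Nat.cast_nonneg (α := ℝ) n, hx]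
    -- basis decomposition
    have hsp : ⊤ ≤ Submodule.span ℝ (Set.range u) := by
      apply ge_of_eq
      apply hu.linearIndependent.span_eq_top_of_card_eq_finrank'
      simp
    set b := OrthonormalBasis.mk hu hsp with hb
    have hrepr : ∑ i, c i • u i = x - x₀ := by
      have := b.sum_repr' (x - x₀)
      simp only [hb, OrthonormalBasis.coe_mk] at this
      rw [← this]
      apply Finset.sum_congr rfl
      intro i _
      congr 1
      rw [hc]
      exact real_inner_comm _ _
    refine Set.mem_iUnion₂.2 ⟨x₀ + ∑ i, ((k i : ℝ) * ℓ i / s) • u i,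
      Finset.mem_image_of_mem _ hkK, ?_⟩
    refine ⟨fun i => c i - (k i:ℝ) * ℓ i / s, ?_, ?_⟩
    · intro i
      have hn : 0 < n := i.pos
      have hspos : 0 < s := Real.sqrt_pos.2 (by exact_mod_cast hn)
      obtain ⟨hA, hB⟩ := hfl i
      constructor
      · rw [sub_nonneg, div_le_iff₀ hspos]
        exact hA
      · have hsplit : ((k i:ℝ)+1) * ℓ i / s = (k i:ℝ) * ℓ i / s + ℓ i / s := by ring
        have : c i ≤ ((k i:ℝ)+1) * ℓ i / s := by
          rw [le_div_iff₀ hspos]; exact hB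
        linarith [hsplit ▸ this]
    · have hcomb : ∑ i, ((k i : ℝ) * ℓ i / s) • u i + ∑ i, (c i - (k i:ℝ) * ℓ i / s) • u i
          = ∑ i, c i • u i := by
        rw [← Finset.sum_add_distrib]
        apply Finset.sum_congr rfl
        intro i _
        rw [← add_smul]
        congr 1
        ring
      rw [add_assoc, hcomb, hrepr, add_sub_cancel]
end

section
/- There exists an absolute constant C ≥ 1 such that for every n and every right-parallelepiped in ℝⁿ (not necessarily axis-aligned or centered at a lattice point) with edge lengths ℓ_1, …, ℓ_n all at least 1, the number of points of ℤⁿ contained in the parallelepiped is at most Cⁿ · Π_{i=1}^{n} ℓ_i. -/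
open MeasureTheory ProbabilityTheory Matrix
open scoped ENNReal

lemma geom_exp_sum (n : ℕ) :
    ∑ k ∈ Finset.Icc (-(n:ℤ)) n, Real.exp (-(k:ℝ)^2) ≤ 4 := by
  classical
  have hsub : Finset.Icc (-(n:ℤ)) n ⊆
      (Finset.range (n+1)).image (fun j : ℕ => (j:ℤ)) ∪
      (Finset.range (n+1)).image (fun j : ℕ => -(j:ℤ)) := by
    intro k hk
    simp only [Finset.mem_Icc] at hk
    rcases le_or_gt 0 k with h0 | h0
    · apply Finset.mem_union_left
      refine Finset.mem_image.2 ⟨k.toNat, ?_, by omega⟩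
      simp only [Finset.mem_range]; omega
    · apply Finset.mem_union_right
      refine Finset.mem_image.2 ⟨(-k).toNat, ?_, by omega⟩
      simp only [Finset.mem_range]; omega
  have hterm : ∀ j : ℕ, Real.exp (-((j:ℤ):ℝ)^2) ≤ (1/2:ℝ)^j := by
    intro j
    have h1 : ((j:ℤ):ℝ) = (j:ℝ) := by push_cast; ring
    have hj : (j:ℝ) ≤ (j:ℝ)^2 := by
      have := Nat.le_self_pow (two_ne_zero) j
      exact_mod_cast this
    calc Real.exp (-((j:ℤ):ℝ)^2) ≤ Real.exp (-(j:ℝ)) := by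
          rw [h1]; exact Real.exp_le_exp.2 (by linarith)
      _ = Real.exp (-1) ^ j := by
          rw [← Real.exp_nat_mul]; ring_nf
      _ ≤ (1/2:ℝ)^j := by
          apply pow_le_pow_left₀ (Real.exp_nonneg _)
          rw [Real.exp_neg]
          rw [inv_le_comm₀ (Real.exp_pos _) (by norm_num)]
          calc (1/2:ℝ)⁻¹ = 2 := by norm_num
            _ ≤ Real.exp 1 := by
                have := Real.add_one_le_exp (1:ℝ); linarith
  have himg : ∀ (f : ℕ → ℤ), Function.Injective f →
      (∀ j : ℕ, Real.exp (-((f j):ℝ)^2) ≤ (1/2:ℝ)^j) →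
      ∑ k ∈ (Finset.range (n+1)).image f, Real.exp (-(k:ℝ)^2) ≤ 2 := by
    intro f hf hb
    rw [Finset.sum_image (fun a _ b _ h => hf h)]
    calc ∑ j ∈ Finset.range (n+1), Real.exp (-((f j):ℝ)^2)
        ≤ ∑ j ∈ Finset.range (n+1), (1/2:ℝ)^j := Finset.sum_le_sum (fun j _ => hb j)
      _ ≤ 2 := sum_geometric_two_le _
  calc ∑ k ∈ Finset.Icc (-(n:ℤ)) n, Real.exp (-(k:ℝ)^2)
      ≤ ∑ k ∈ ((Finset.range (n+1)).image (fun j : ℕ => (j:ℤ)) ∪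
          (Finset.range (n+1)).image (fun j : ℕ => -(j:ℤ))), Real.exp (-(k:ℝ)^2) :=
        Finset.sum_le_sum_of_subset_of_nonneg hsub (fun _ _ _ => Real.exp_nonneg _)
    _ ≤ ∑ k ∈ (Finset.range (n+1)).image (fun j : ℕ => (j:ℤ)), Real.exp (-(k:ℝ)^2)
        + ∑ k ∈ (Finset.range (n+1)).image (fun j : ℕ => -(j:ℤ)), Real.exp (-(k:ℝ)^2) := by
        have := Finset.sum_union_inter (s₁ := (Finset.range (n+1)).image (fun j : ℕ => (j:ℤ)))
          (s₂ := (Finset.range (n+1)).image (fun j : ℕ => -(j:ℤ)))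
          (f := fun k => Real.exp (-(k:ℝ)^2))
        have hnn : 0 ≤ ∑ k ∈ ((Finset.range (n+1)).image (fun j : ℕ => (j:ℤ)) ∩
            (Finset.range (n+1)).image (fun j : ℕ => -(j:ℤ))), Real.exp (-(k:ℝ)^2) :=
          Finset.sum_nonneg (fun _ _ => Real.exp_nonneg _)
        linarith
    _ ≤ 2 + 2 := by
        gcongr
        · exact himg _ (fun a b h => by exact_mod_cast h) (fun j => hterm j)
        · apply himg _ (fun a b h => by omega)
          intro j
          have h2 : (((-(j:ℤ)):ℤ):ℝ)^2 = ((j:ℤ):ℝ)^2 := by push_cast; ring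
          rw [h2]
          exact hterm j
    _ ≤ 4 := by norm_num

/-- the number of integer points in a right-parallelepiped with edge lengths
`ℓᵢ ≥ 1` is at most `Cⁿ ∏ ℓᵢ`. -/
theorem lattice_points_in_box :
    ∃ C ≥ (1:ℝ), ∀ (n : ℕ) (u : Fin n → EuclideanSpace ℝ (Fin n)), Orthonormal ℝ u →
      ∀ ℓ : Fin n → ℝ, (∀ i, 1 ≤ ℓ i) → ∀ x₀ : EuclideanSpace ℝ (Fin n),
      ∀ S : Finset (Fin n → ℤ),
        (∀ p ∈ S, ∃ t : Fin n → ℝ, (∀ i, |t i| ≤ ℓ i / 2) ∧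
          toE (fun i => (p i : ℝ)) = x₀ + ∑ i, t i • u i) →
        (S.card : ℝ) ≤ C ^ n * ∏ i, ℓ i := by
  classical
  refine ⟨36, by norm_num, ?_⟩
  intro n u hu ℓ hℓ x₀ S hS
  choose! t ht htrep using hS
  set f : (Fin n → ℤ) → (Fin n → ℤ) := fun p i => ⌊t p i⌋ with hf
  set G : Finset (Fin n → ℤ) :=
    Fintype.piFinset (fun i => Finset.Icc ⌊-(ℓ i / 2)⌋ ⌊ℓ i / 2⌋) with hG
  have hmem : ∀ p ∈ S, f p ∈ G := by
    intro p hp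
    rw [hG, Fintype.mem_piFinset]
    intro i
    have h := ht p hp i
    rw [abs_le] at h
    exact Finset.mem_Icc.2 ⟨Int.floor_le_floor h.1, Int.floor_le_floor h.2⟩
  -- distance bound for two points in the same fiber
  have hdist : ∀ p ∈ S, ∀ q ∈ S, f p = f q →
      ∑ i, ((p i - q i : ℤ) : ℝ)^2 ≤ (n : ℝ) := by
    intro p hp q hq hfeq
    have hlt : ∀ i, (t p i - t q i)^2 ≤ 1 := by
      intro i
      have h1 : ⌊t p i⌋ = ⌊t q i⌋ := congrFun hfeq i
      have h2 : (⌊t p i⌋ : ℝ) ≤ t p i := Int.floor_le _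
      have h3 : t p i < ⌊t p i⌋ + 1 := Int.lt_floor_add_one _
      have h4 : (⌊t q i⌋ : ℝ) ≤ t q i := Int.floor_le _
      have h5 : t q i < ⌊t q i⌋ + 1 := Int.lt_floor_add_one _
      rw [h1] at h2 h3
      nlinarith
    have hdiffE : toE (fun i => ((p i : ℝ))) - toE (fun i => ((q i : ℝ)))
        = ∑ i, (t p i - t q i) • u i := by
      rw [htrep p hp, htrep q hq]
      rw [add_sub_add_left_eq_sub, ← Finset.sum_sub_distrib]
      exact Finset.sum_congr rfl (fun i _ => (sub_smul _ _ _).symm)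
    have hnorm2 : ‖toE (fun i => ((p i : ℝ))) - toE (fun i => ((q i : ℝ)))‖^2
        = ∑ i, (t p i - t q i)^2 := by
      rw [hdiffE, ← real_inner_self_eq_norm_sq, hu.inner_sum]
      simp [sq]
    have hnorm2' : ‖toE (fun i => ((p i : ℝ))) - toE (fun i => ((q i : ℝ)))‖^2
        = ∑ i, ((p i - q i : ℤ) : ℝ)^2 := by
      have he : toE (fun i => ((p i : ℝ))) - toE (fun i => ((q i : ℝ)))
          = toE (fun i => ((p i - q i : ℤ) : ℝ)) := by
        unfold toE
        ext i
        push_cast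
        simp
      rw [he]
      rw [EuclideanSpace.norm_eq]
      rw [Real.sq_sqrt (by positivity)]
      refine Finset.sum_congr rfl (fun i _ => ?_)
      rw [Real.norm_eq_abs, sq_abs]
      rfl
    calc ∑ i, ((p i - q i : ℤ) : ℝ)^2 = ∑ i, (t p i - t q i)^2 := by
          rw [← hnorm2', hnorm2]
      _ ≤ ∑ _i : Fin n, (1:ℝ) := Finset.sum_le_sum (fun i _ => hlt i)
      _ = n := by simp
  -- fiber bound
  have hfiber : ∀ g, ((S.filter (fun p => f p = g)).card : ℝ) ≤ 12 ^ n := by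
    intro g
    set T := S.filter (fun p => f p = g) with hT
    rcases T.eq_empty_or_nonempty with hE | ⟨q₀, hq₀⟩
    · rw [hE]
      simp only [Finset.card_empty, Nat.cast_zero]
      positivity
    have hq₀S : q₀ ∈ S := (Finset.mem_filter.1 hq₀).1
    have hq₀f : f q₀ = g := (Finset.mem_filter.1 hq₀).2
    set D := T.image (fun p => (fun i => p i - q₀ i)) with hD
    have hinj : Function.Injective (fun (p : Fin n → ℤ) => (fun i => p i - q₀ i)) := by
      intro a b hab
      funext i
      have h2 : a i - q₀ i = b i - q₀ i := congrFun hab i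
      omega
    have hcard : T.card = D.card := by
      rw [hD]
      exact (Finset.card_image_of_injective _ hinj).symm
    have hDprop : ∀ d ∈ D, ∑ i, ((d i : ℤ) : ℝ)^2 ≤ (n : ℝ) := by
      intro d hd
      rcases Finset.mem_image.1 hd with ⟨p, hpT, hpd⟩
      have hpS : p ∈ S := (Finset.mem_filter.1 hpT).1
      have hpf : f p = g := (Finset.mem_filter.1 hpT).2
      have := hdist p hpS q₀ hq₀S (hpf.trans hq₀f.symm)
      rw [← hpd]
      simpa using this
    have hDsub : D ⊆ Fintype.piFinset (fun _ : Fin n => Finset.Icc (-(n:ℤ)) n) := by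
      intro d hd
      rw [Fintype.mem_piFinset]
      intro i
      have hsum := hDprop d hd
      have hterm : ((d i : ℤ) : ℝ)^2 ≤ (n : ℝ) :=
        le_trans (Finset.single_le_sum (f := fun j => ((d j : ℤ) : ℝ)^2)
          (fun j _ => by positivity) (Finset.mem_univ i)) hsum
      have hn1 : 0 < n := i.pos
      have habs : |((d i : ℤ) : ℝ)| ≤ (n : ℝ) := by
        have hn : (1:ℝ) ≤ (n:ℝ) := by exact_mod_cast hn1
        nlinarith [abs_nonneg ((d i : ℤ) : ℝ), sq_abs ((d i : ℤ) : ℝ)]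
      rw [Finset.mem_Icc]
      rw [abs_le] at habs
      constructor
      · exact_mod_cast habs.1
      · exact_mod_cast habs.2
    calc (T.card : ℝ) = ∑ _d ∈ D, (1:ℝ) := by rw [hcard]; simp
      _ ≤ ∑ d ∈ D, Real.exp ((n:ℝ) - ∑ i, ((d i : ℤ) : ℝ)^2) :=
          Finset.sum_le_sum (fun d hd => Real.one_le_exp (by linarith [hDprop d hd]))
      _ ≤ ∑ d ∈ Fintype.piFinset (fun _ : Fin n => Finset.Icc (-(n:ℤ)) n),
            Real.exp ((n:ℝ) - ∑ i, ((d i : ℤ) : ℝ)^2) :=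
          Finset.sum_le_sum_of_subset_of_nonneg hDsub (fun _ _ _ => Real.exp_nonneg _)
      _ = Real.exp 1 ^ n * ∑ d ∈ Fintype.piFinset (fun _ : Fin n => Finset.Icc (-(n:ℤ)) n),
            ∏ i, Real.exp (-((d i : ℤ) : ℝ)^2) := by
          rw [Finset.mul_sum]
          refine Finset.sum_congr rfl (fun d _ => ?_)
          have hexp : Real.exp 1 ^ n = Real.exp (n:ℝ) := by
            rw [← Real.exp_nat_mul]; norm_num
          rw [hexp, ← Real.exp_sum, ← Real.exp_add]
          congr 1
          rw [Finset.sum_neg_distrib]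
          ring
      _ = Real.exp 1 ^ n * ∏ _i : Fin n, ∑ k ∈ Finset.Icc (-(n:ℤ)) n,
            Real.exp (-(k : ℝ)^2) := by
          congr 1
          exact Finset.sum_prod_piFinset (Finset.Icc (-(n:ℤ)) n)
            (fun (_ : Fin n) (k : ℤ) => Real.exp (-(k:ℝ)^2))
      _ ≤ 3 ^ n * 4 ^ n := by
          have h3 : Real.exp 1 ≤ 3 := by
            have := Real.exp_one_lt_d9
            linarith
          have hA : Real.exp 1 ^ n ≤ 3 ^ n :=
            pow_le_pow_left₀ (Real.exp_nonneg _) h3 n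
          have hB : (∏ _i : Fin n, ∑ k ∈ Finset.Icc (-(n:ℤ)) n, Real.exp (-(k : ℝ)^2))
              ≤ 4 ^ n := by
            calc (∏ _i : Fin n, ∑ k ∈ Finset.Icc (-(n:ℤ)) n, Real.exp (-(k : ℝ)^2))
                ≤ ∏ _i : Fin n, (4:ℝ) := Finset.prod_le_prod
                  (fun _ _ => Finset.sum_nonneg (fun _ _ => Real.exp_nonneg _))
                  (fun _ _ => geom_exp_sum n)
              _ = 4 ^ n := by rw [Finset.prod_const, Finset.card_univ, Fintype.card_fin]
          have hprodnn : (0:ℝ) ≤ ∏ _i : Fin n, ∑ k ∈ Finset.Icc (-(n:ℤ)) n,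
              Real.exp (-(k : ℝ)^2) :=
            Finset.prod_nonneg (fun _ _ => Finset.sum_nonneg (fun _ _ => Real.exp_nonneg _))
          exact mul_le_mul hA hB hprodnn (by positivity)
      _ = 12 ^ n := by rw [← mul_pow]; norm_num
  -- G card bound
  have hGcard : (G.card : ℝ) ≤ 3 ^ n * ∏ i, ℓ i := by
    rw [hG, Fintype.card_piFinset]
    push_cast
    calc ∏ i, ((Finset.Icc ⌊-(ℓ i / 2)⌋ ⌊ℓ i / 2⌋).card : ℝ)
        ≤ ∏ i, (3 * ℓ i) := by
          refine Finset.prod_le_prod (fun i _ => by positivity) (fun i _ => ?_)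
          rw [Int.card_Icc]
          have hge : (0:ℤ) ≤ ⌊ℓ i / 2⌋ + 1 - ⌊-(ℓ i / 2)⌋ := by
            have ha : (0:ℝ) ≤ ℓ i / 2 := by linarith [hℓ i]
            have hb : ⌊-(ℓ i / 2)⌋ ≤ 0 := by
              apply Int.floor_nonpos; linarith
            have hc : (0:ℤ) ≤ ⌊ℓ i / 2⌋ := Int.floor_nonneg.2 ha
            omega
          have h0 : (((⌊ℓ i / 2⌋ + 1 - ⌊-(ℓ i / 2)⌋).toNat : ℕ) : ℝ)
              = ((⌊ℓ i / 2⌋ + 1 - ⌊-(ℓ i / 2)⌋ : ℤ) : ℝ) := by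
            exact_mod_cast congrArg (Int.cast : ℤ → ℝ) (Int.toNat_of_nonneg hge)
          rw [h0]
          have h1 : (⌊ℓ i / 2⌋ : ℝ) ≤ ℓ i / 2 := Int.floor_le _
          have h2 := Int.lt_floor_add_one (-(ℓ i / 2))
          have hl := hℓ i
          push_cast
          linarith
      _ = 3 ^ n * ∏ i, ℓ i := by
          rw [Finset.prod_mul_distrib, Finset.prod_const]
          simp
  -- assemble
  have hcount : (S.card : ℝ) = ∑ g ∈ G, ((S.filter (fun p => f p = g)).card : ℝ) := by
    rw [Finset.card_eq_sum_card_fiberwise hmem]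
    push_cast
    rfl
  calc (S.card : ℝ) = ∑ g ∈ G, ((S.filter (fun p => f p = g)).card : ℝ) := hcount
    _ ≤ ∑ _g ∈ G, (12:ℝ) ^ n := Finset.sum_le_sum (fun g _ => hfiber g)
    _ = (G.card : ℝ) * 12 ^ n := by rw [Finset.sum_const, nsmul_eq_mul]
    _ ≤ (3 ^ n * ∏ i, ℓ i) * 12 ^ n := by
        have h12 : (0:ℝ) ≤ (12:ℝ)^n := by positivity
        nlinarith [hGcard]
    _ = 36 ^ n * ∏ i, ℓ i := by rw [show (36:ℝ) = 3 * 12 by norm_num, mul_pow]; ring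
end

section
/- Let n ≥ 2, let K ≥ 1, and let L ≥ 2K√n. Let R_n be an n×n random matrix with i.i.d. lazy Rademacher entries, write R_{n−1} for its top-left (n−1)×(n−1) submatrix, u ∈ ℝ^{n−1} for the first n−1 entries of its last column, and wᵀ for the first n−1 entries of its last row (so R_{n−1}, u, w, and the (n,n) entry are jointly independent with lazy Rademacher entries). Let A = diag(L, …, L, 0) be the n×n diagonal matrix with first n−1 diagonal entries L and last diagonal entry 0. Then for every ε ≥ 0, (1/2)·P[ |Σ_{i≥0} wᵀ(R_{n−1}/L)^i u| ≤ Lε and ‖R_{n−1}‖ ≤ K√n ] ≤ P[s_n(A − R_n) ≤ ε] + P[‖R_n‖ > K√n]. -/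
open MeasureTheory ProbabilityTheory Matrix
open scoped ENNReal

noncomputable section

/-- The last index of `Fin n` (for `n ≥ 1`). -/
def lastIdx {n : ℕ} (hn : 1 ≤ n) : Fin n := ⟨n - 1, Nat.sub_lt hn Nat.one_pos⟩

/-- The top-left (n−1)×(n−1) corner of an n×n matrix. -/
def corner {n : ℕ} (R : Matrix (Fin n) (Fin n) ℝ) : Matrix (Fin (n-1)) (Fin (n-1)) ℝ :=
  fun i j => R (Fin.castLE (Nat.sub_le n 1) i) (Fin.castLE (Nat.sub_le n 1) j)

/-- The first n−1 entries of the last column of an n×n matrix. -/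
def lastColTop {n : ℕ} (hn : 1 ≤ n) (R : Matrix (Fin n) (Fin n) ℝ) : Fin (n-1) → ℝ :=
  fun i => R (Fin.castLE (Nat.sub_le n 1) i) (lastIdx hn)

/-- The first n−1 entries of the last row of an n×n matrix. -/
def lastRowLeft {n : ℕ} (hn : 1 ≤ n) (R : Matrix (Fin n) (Fin n) ℝ) : Fin (n-1) → ℝ :=
  fun j => R (lastIdx hn) (Fin.castLE (Nat.sub_le n 1) j)

lemma euclNorm_nonneg {m : ℕ} (v : Fin m → ℝ) : 0 ≤ euclNorm v := Real.sqrt_nonneg _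

lemma euclNorm_smul {m : ℕ} (c : ℝ) (v : Fin m → ℝ) : euclNorm (c • v) = |c| * euclNorm v := by
  unfold euclNorm
  have h : ∑ i, (c • v) i ^ 2 = c ^ 2 * ∑ i, v i ^ 2 := by
    rw [Finset.mul_sum]; exact Finset.sum_congr rfl fun i _ => by simp [mul_pow]
  rw [h, Real.sqrt_mul (sq_nonneg c), Real.sqrt_sq_eq_abs]

lemma specNorm_nonneg {a b : ℕ} (A : Matrix (Fin a) (Fin b) ℝ) : 0 ≤ specNorm A := norm_nonneg _

lemma specNorm_smul {a b : ℕ} (c : ℝ) (A : Matrix (Fin a) (Fin b) ℝ) :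
    specNorm (c • A) = |c| * specNorm A := by
  unfold specNorm
  rw [_root_.map_smul, _root_.map_smul, norm_smul c (LinearMap.toContinuousLinearMap (Matrix.toEuclideanLin A)), Real.norm_eq_abs]

lemma specNorm_continuous {a b : ℕ} : Continuous (specNorm : Matrix (Fin a) (Fin b) ℝ → ℝ) := by
  let Φ : Matrix (Fin a) (Fin b) ℝ →ₗ[ℝ] (EuclideanSpace ℝ (Fin b) →L[ℝ] EuclideanSpace ℝ (Fin a)) :=
    (LinearMap.toContinuousLinearMap.toLinearMap).comp (Matrix.toEuclideanLin.toLinearMap)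
  have hΦ : Continuous Φ := Φ.continuous_of_finiteDimensional
  exact continuous_norm.comp hΦ

lemma geom_facts {m : ℕ} (B : Matrix (Fin m) (Fin m) ℝ) (u w : Fin m → ℝ)
    (hB : specNorm B < 1) :
    ∃ vb : Fin m → ℝ,
      HasSum (fun i : ℕ => w ⬝ᵥ ((B ^ i).mulVec u)) (w ⬝ᵥ vb) ∧
      ∀ j, vb j - B.mulVec vb j = u j := by
  set E := EuclideanSpace ℝ (Fin m)
  set T : E →L[ℝ] E := LinearMap.toContinuousLinearMap (Matrix.toEuclideanLin B) with hTdef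
  have hT : ‖T‖ < 1 := hB
  have hsum : Summable (fun i : ℕ => T ^ i) := summable_geometric_of_norm_lt_one hT
  have h2 : HasSum (fun i : ℕ => (T ^ i) (toE u)) ((∑' i : ℕ, T ^ i) (toE u)) :=
    hsum.hasSum.mapL (ContinuousLinearMap.apply ℝ E (toE u))
  have hTapp : ∀ y : Fin m → ℝ, T (toE y) = toE (B.mulVec y) := by
    intro y
    show Matrix.toEuclideanLin B (toE y) = toE (B.mulVec y)
    rw [Matrix.toEuclideanLin_apply]
    simp [toE]
  have hTpow : ∀ i : ℕ, (T ^ i) (toE u) = toE ((B ^ i).mulVec u) := by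
    intro i
    induction i with
    | zero => simp [toE]
    | succ i ih =>
      rw [pow_succ', ContinuousLinearMap.mul_apply, ih, hTapp, pow_succ', ← mulVec_mulVec]
  set vb : Fin m → ℝ := WithLp.equiv 2 (Fin m → ℝ) ((∑' i : ℕ, T ^ i) (toE u)) with hvb
  refine ⟨vb, ?_, ?_⟩
  · set φ : E →L[ℝ] ℝ := LinearMap.toContinuousLinearMap
      { toFun := fun x => w ⬝ᵥ (WithLp.equiv 2 (Fin m → ℝ) x),
        map_add' := fun x y => by
          have h : (WithLp.equiv 2 (Fin m → ℝ)) (x + y)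
              = WithLp.equiv 2 (Fin m → ℝ) x + WithLp.equiv 2 (Fin m → ℝ) y := rfl
          rw [h, dotProduct_add],
        map_smul' := fun c x => by
          have h : (WithLp.equiv 2 (Fin m → ℝ)) (c • x)
              = c • WithLp.equiv 2 (Fin m → ℝ) x := rfl
          rw [h, dotProduct_smul, smul_eq_mul, smul_eq_mul, RingHom.id_apply] } with hφ
    have h3 := h2.mapL φ
    have he : ∀ i : ℕ, φ ((T ^ i) (toE u)) = w ⬝ᵥ ((B ^ i).mulVec u) := by
      intro i; rw [hTpow]; simp [hφ, toE]
    have he2 : φ ((∑' i : ℕ, T ^ i) (toE u)) = w ⬝ᵥ vb := by simp [hφ, hvb]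
    simp only [he, he2] at h3; exact h3
  · intro j
    have h4 : (1 - T) ((∑' i : ℕ, T ^ i) (toE u)) = toE u := by
      have := mul_neg_geom_series T hT
      calc (1 - T) ((∑' i : ℕ, T ^ i) (toE u)) = ((1 - T) * ∑' i : ℕ, T ^ i) (toE u) := rfl
        _ = toE u := by rw [this]; rfl
    have h5 : (∑' i : ℕ, T ^ i) (toE u) - T ((∑' i : ℕ, T ^ i) (toE u)) = toE u := by
      simpa [ContinuousLinearMap.sub_apply] using h4
    have h6 : T ((∑' i : ℕ, T ^ i) (toE u)) = toE (B.mulVec vb) := by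
      have : (∑' i : ℕ, T ^ i) (toE u) = toE vb := by simp [hvb, toE]
      rw [this, hTapp]
    rw [h6] at h5
    have := congrArg (fun z => WithLp.equiv 2 (Fin m → ℝ) z j) h5
    exact this

lemma smin_le {n : ℕ} (A : Matrix (Fin n) (Fin n) ℝ) (x : Fin n → ℝ) (hx : euclNorm x = 1) :
    smin A ≤ euclNorm (A.mulVec x) := by
  apply csInf_le
  · exact ⟨0, by rintro r ⟨y, hy, rfl⟩; exact euclNorm_nonneg _⟩
  · exact ⟨x, hx, rfl⟩

lemma sum_split {n : ℕ} (hn : 1 ≤ n) (F : Fin n → ℝ) :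
    ∑ j, F j = (∑ j : Fin (n-1), F (Fin.castLE (Nat.sub_le n 1) j)) + F (lastIdx hn) := by
  obtain ⟨m, rfl⟩ : ∃ m, n = m + 1 := ⟨n - 1, by omega⟩
  exact Fin.sum_univ_castSucc F

-- key bound: specNorm of scaled corner
lemma specB_lt {n : ℕ} (hn : 2 ≤ n) {K L : ℝ} (hK : 1 ≤ K)
    (hL : 2 * K * Real.sqrt n ≤ L) (N : Matrix (Fin n) (Fin n) ℝ)
    (hspec : specNorm (corner N) ≤ K * Real.sqrt n) :
    specNorm (L⁻¹ • corner N) < 1 ∧ 0 < L := by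
  have hs1 : (1:ℝ) ≤ Real.sqrt n := by
    rw [show (1:ℝ) = Real.sqrt 1 by simp]
    apply Real.sqrt_le_sqrt
    exact_mod_cast Nat.one_le_iff_ne_zero.mpr (by omega)
  have hKn : 0 < K * Real.sqrt n := by nlinarith
  have hLpos : 0 < L := by nlinarith
  have h1 : specNorm (L⁻¹ • corner N) = L⁻¹ * specNorm (corner N) := by
    rw [specNorm_smul, abs_of_pos (inv_pos.mpr hLpos)]
  refine ⟨?_, hLpos⟩
  rw [h1]
  have hinv : (0:ℝ) ≤ L⁻¹ := le_of_lt (inv_pos.mpr hLpos)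
  calc L⁻¹ * specNorm (corner N) ≤ L⁻¹ * (K * Real.sqrt n) :=
        mul_le_mul_of_nonneg_left hspec hinv
    _ ≤ L⁻¹ * (L / 2) := mul_le_mul_of_nonneg_left (by linarith) hinv
    _ = 1 / 2 := by field_simp
    _ < 1 := by norm_num

lemma main_det {n : ℕ} (hn : 2 ≤ n) (K L ε : ℝ) (hK : 1 ≤ K)
    (hL : 2 * K * Real.sqrt n ≤ L) (hε : 0 ≤ ε)
    (N : Matrix (Fin n) (Fin n) ℝ)
    (hspec : specNorm (corner N) ≤ K * Real.sqrt n)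
    (hzero : N (lastIdx (Nat.one_le_of_lt hn)) (lastIdx (Nat.one_le_of_lt hn)) = 0)
    (hG : |∑' i : ℕ, lastRowLeft (Nat.one_le_of_lt hn) N ⬝ᵥ
        (((L⁻¹ • corner N) ^ i).mulVec (lastColTop (Nat.one_le_of_lt hn) N))| ≤ L * ε) :
    smin (Matrix.diagonal (fun i : Fin n => if (i:ℕ) = n - 1 then 0 else L) - N) ≤ ε := by
  have h1n : 1 ≤ n := by omega
  obtain ⟨hB, hLpos⟩ := specB_lt hn hK hL N hspec
  have hinv : (0:ℝ) ≤ L⁻¹ := le_of_lt (inv_pos.mpr hLpos)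
  obtain ⟨vb, hHS, hvb⟩ := geom_facts (L⁻¹ • corner N) (lastColTop h1n N) (lastRowLeft h1n N) hB
  set G : ℝ := lastRowLeft h1n N ⬝ᵥ vb with hGdef
  have htsum : (∑' i : ℕ, lastRowLeft h1n N ⬝ᵥ
      (((L⁻¹ • corner N) ^ i).mulVec (lastColTop h1n N))) = G := hHS.tsum_eq
  have hG0 : |∑' i : ℕ, lastRowLeft h1n N ⬝ᵥ
      (((L⁻¹ • corner N) ^ i).mulVec (lastColTop h1n N))| ≤ L * ε := hG
  rw [htsum] at hG0
  have hzero' : N (lastIdx h1n) (lastIdx h1n) = 0 := hzero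
  set x0 : Fin n → ℝ := fun i => if h : (i:ℕ) < n - 1 then L⁻¹ * vb ⟨i.1, h⟩ else 1 with hx0
  set D : Matrix (Fin n) (Fin n) ℝ :=
    Matrix.diagonal (fun i : Fin n => if (i:ℕ) = n - 1 then 0 else L) with hD
  have hmv : (D - N).mulVec x0 = fun i : Fin n => if (i:ℕ) = n - 1 then -(L⁻¹ * G) else 0 := by
    funext i
    have hsub : (D - N).mulVec x0 i = D.mulVec x0 i - N.mulVec x0 i := by
      rw [Matrix.sub_mulVec]; rfl
    have hDi : D.mulVec x0 i = (if (i:ℕ) = n - 1 then 0 else L) * x0 i := by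
      rw [hD, Matrix.mulVec_diagonal]
    have hNi : N.mulVec x0 i =
        (∑ j : Fin (n-1), N i (Fin.castLE (Nat.sub_le n 1) j) * (L⁻¹ * vb j))
          + N i (lastIdx h1n) := by
      show ∑ j, N i j * x0 j = _
      rw [sum_split h1n (fun j => N i j * x0 j)]
      congr 1
      · apply Finset.sum_congr rfl; intro j _
        have hx : x0 (Fin.castLE (Nat.sub_le n 1) j) = L⁻¹ * vb j := by
          have hj : ((Fin.castLE (Nat.sub_le n 1) j : Fin n) : ℕ) < n - 1 := j.2
          simp only [hx0]; rw [dif_pos hj]; rfl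
        rw [hx]
      · have hx : x0 (lastIdx h1n) = 1 := by
          simp only [hx0]; rw [dif_neg (by simp [lastIdx])]
        rw [hx, mul_one]
    rw [hsub, hDi, hNi]
    by_cases hi : (i:ℕ) < n - 1
    · set i' : Fin (n-1) := ⟨i.1, hi⟩ with hi'
      have hieq : Fin.castLE (Nat.sub_le n 1) i' = i := by ext; rfl
      have hine : (i:ℕ) ≠ n - 1 := Nat.ne_of_lt hi
      rw [if_neg hine, if_neg hine]
      have hx0i : x0 i = L⁻¹ * vb i' := by simp only [hx0]; rw [dif_pos hi]
      rw [hx0i]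
      have hLL : L * (L⁻¹ * vb i') = vb i' := by field_simp
      have hmulvec : (∑ j : Fin (n-1), N i (Fin.castLE (Nat.sub_le n 1) j) * (L⁻¹ * vb j))
          = ((L⁻¹ • corner N).mulVec vb) i' := by
        show _ = ∑ j, (L⁻¹ • corner N) i' j * vb j
        apply Finset.sum_congr rfl; intro j _
        have : N i (Fin.castLE (Nat.sub_le n 1) j) = corner N i' j := by rw [← hieq]; rfl
        rw [this, Matrix.smul_apply, smul_eq_mul]; ring
      have hNlast : N i (lastIdx h1n) = lastColTop h1n N i' := by rw [← hieq]; rfl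
      rw [hmulvec, hNlast, hLL]
      have := hvb i'
      linarith [hvb i']
    · have hieq : i = lastIdx h1n := by
        have := i.2; ext; simp only [lastIdx]; omega
      have hie : (i:ℕ) = n - 1 := by rw [hieq]; rfl
      rw [if_pos hie, if_pos hie, zero_mul]
      have hNlast : N i (lastIdx h1n) = 0 := by rw [hieq]; exact hzero'
      have hsum : (∑ j : Fin (n-1), N i (Fin.castLE (Nat.sub_le n 1) j) * (L⁻¹ * vb j))
          = L⁻¹ * G := by
        rw [hGdef]
        show _ = L⁻¹ * ∑ j, lastRowLeft h1n N j * vb j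
        rw [Finset.mul_sum]
        apply Finset.sum_congr rfl; intro j _
        have : N i (Fin.castLE (Nat.sub_le n 1) j) = lastRowLeft h1n N j := by rw [hieq]; rfl
        rw [this]; ring
      rw [hsum, hNlast]; ring
  have heucl : euclNorm ((D - N).mulVec x0) = L⁻¹ * |G| := by
    rw [hmv]; unfold euclNorm
    have hs : ∑ i : Fin n, (if (i:ℕ) = n - 1 then -(L⁻¹*G) else 0)^2 = (L⁻¹*G)^2 := by
      rw [Finset.sum_eq_single (lastIdx h1n)]
      · simp [lastIdx]
      · intro b _ hb
        have : (b:ℕ) ≠ n-1 := by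
          intro h; exact hb (by ext; simpa [lastIdx] using h)
        simp [this]
      · simp
    rw [hs, Real.sqrt_sq_eq_abs, abs_mul, abs_of_pos (inv_pos.mpr hLpos)]
  have hbound : euclNorm ((D-N).mulVec x0) ≤ ε := by
    rw [heucl]
    calc L⁻¹ * |G| ≤ L⁻¹ * (L*ε) := mul_le_mul_of_nonneg_left hG0 hinv
      _ = ε := by field_simp
  have hx0norm : 1 ≤ euclNorm x0 := by
    unfold euclNorm
    rw [show (1:ℝ) = Real.sqrt 1 by simp]
    apply Real.sqrt_le_sqrt
    rw [sum_split h1n (fun j => x0 j ^ 2)]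
    have h1 : x0 (lastIdx h1n) = 1 := by simp only [hx0]; rw [dif_neg (by simp [lastIdx])]
    have h2 : 0 ≤ ∑ j : Fin (n-1), x0 (Fin.castLE (Nat.sub_le n 1) j)^2 :=
      Finset.sum_nonneg fun j _ => sq_nonneg _
    rw [h1]; nlinarith
  have hx0pos : 0 < euclNorm x0 := lt_of_lt_of_le one_pos hx0norm
  set c := (euclNorm x0)⁻¹ with hc
  have hcpos : 0 < c := inv_pos.mpr hx0pos
  have hcle : c ≤ 1 := by
    rw [hc]; exact inv_le_one_of_one_le₀ hx0norm
  have hunit : euclNorm (c • x0) = 1 := by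
    rw [euclNorm_smul, abs_of_pos hcpos, hc]; field_simp
  have h := smin_le (D - N) (c • x0) hunit
  rw [Matrix.mulVec_smul, euclNorm_smul, abs_of_pos hcpos] at h
  calc smin (D - N) ≤ c * euclNorm ((D-N).mulVec x0) := h
    _ ≤ 1 * ε := mul_le_mul hcle hbound (euclNorm_nonneg _) zero_le_one
    _ = ε := one_mul ε

/-- reduction of the smallest singular value of `A − Rₙ` to the
anti-concentration of `Σ_{i≥0} wᵀ(R_{n−1}/L)ⁱ u`. -/
theorem reduction_to_quadratic {n : ℕ} (hn : 2 ≤ n) (K L : ℝ) (hK : 1 ≤ K)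
    (hL : 2 * K * Real.sqrt n ≤ L)
    {Ω : Type*} [MeasurableSpace Ω] (μ : Measure Ω) [IsProbabilityMeasure μ]
    (R : Ω → Matrix (Fin n) (Fin n) ℝ)
    (hindep : iIndepFun (fun (p : Fin n × Fin n) ω => R ω p.1 p.2) μ)
    (hdist : ∀ i j, IsLazyRademacher μ (fun ω => R ω i j))
    (ε : ℝ) (hε : 0 ≤ ε) :
    (1/2 : ℝ≥0∞) * μ {ω | |∑' i : ℕ, lastRowLeft (by omega) (R ω) ⬝ᵥ
          (((L⁻¹ • corner (R ω)) ^ i).mulVec (lastColTop (by omega) (R ω)))| ≤ L * ε ∧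
        specNorm (corner (R ω)) ≤ K * Real.sqrt n} ≤
      μ {ω | smin (Matrix.diagonal (fun i : Fin n => if (i:ℕ) = n - 1 then 0 else L) - R ω)
          ≤ ε} +
      μ {ω | K * Real.sqrt n < specNorm (R ω)} := by
  classical
  have h1n : 1 ≤ n := by omega
  set q : Fin n × Fin n := (lastIdx h1n, lastIdx h1n) with hq
  set f : Fin n × Fin n → Ω → ℝ := fun p ω => R ω p.1 p.2 with hf
  have hfmeas : ∀ p, Measurable (f p) := fun p => (hdist p.1 p.2).1
  set Sfin : Finset (Fin n × Fin n) := Finset.univ.erase q with hS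
  set Tfin : Finset (Fin n × Fin n) := {q} with hT
  have hdisj : Disjoint Sfin Tfin := by
    simp only [hS, hT, Finset.disjoint_singleton_right, Finset.mem_erase]
    tauto
  have hIF := hindep.indepFun_finset Sfin Tfin hdisj hfmeas
  set XS : Ω → (↥Sfin → ℝ) := fun a (i : ↥Sfin) => f i a with hXS
  set XT : Ω → (↥Tfin → ℝ) := fun a (i : ↥Tfin) => f i a with hXT
  set Mt : (↥Sfin → ℝ) → Matrix (Fin n) (Fin n) ℝ :=
    fun t i j => if h : (i,j) ∈ Sfin then t ⟨(i,j), h⟩ else 0 with hMt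
  set ψ : ℕ → (↥Sfin → ℝ) → ℝ := fun i t => lastRowLeft h1n (Mt t) ⬝ᵥ
      (((L⁻¹ • corner (Mt t)) ^ i).mulVec (lastColTop h1n (Mt t))) with hψ
  set A : Set (↥Sfin → ℝ) := {t | |∑' i : ℕ, ψ i t| ≤ L * ε ∧
      specNorm (corner (Mt t)) ≤ K * Real.sqrt n} with hA
  set Bset : Set (↥Tfin → ℝ) := {t | t ⟨q, Finset.mem_singleton_self q⟩ = 0} with hBset
  -- entries of the reconstructed matrix
  have hentry : ∀ (ω : Ω) (i j : Fin n), (i,j) ≠ q → Mt (XS ω) i j = R ω i j := by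
    intro ω i j hne
    have hmem : (i,j) ∈ Sfin := Finset.mem_erase.mpr ⟨hne, Finset.mem_univ _⟩
    simp only [hMt]; rw [dif_pos hmem]
  have hcast_ne : ∀ a : Fin (n-1), (Fin.castLE (Nat.sub_le n 1) a) ≠ lastIdx h1n := by
    intro a h
    have h2 := a.2
    rw [Fin.ext_iff] at h
    simp only [Fin.coe_castLE, lastIdx] at h
    omega
  have hcornerE : ∀ ω, corner (Mt (XS ω)) = corner (R ω) := by
    intro ω; funext a b
    exact hentry ω _ _ (fun h => hcast_ne a (congrArg Prod.fst h))
  have hrowE : ∀ ω, lastRowLeft h1n (Mt (XS ω)) = lastRowLeft h1n (R ω) := by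
    intro ω; funext b
    exact hentry ω _ _ (fun h => hcast_ne b (congrArg Prod.snd h))
  have hcolE : ∀ ω, lastColTop h1n (Mt (XS ω)) = lastColTop h1n (R ω) := by
    intro ω; funext a
    exact hentry ω _ _ (fun h => hcast_ne a (congrArg Prod.fst h))
  -- the event as a preimage
  have hpreim : {ω | |∑' i : ℕ, lastRowLeft h1n (R ω) ⬝ᵥ
        (((L⁻¹ • corner (R ω)) ^ i).mulVec (lastColTop h1n (R ω)))| ≤ L * ε ∧
        specNorm (corner (R ω)) ≤ K * Real.sqrt n} = XS ⁻¹' A := by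
    ext ω
    simp only [Set.mem_setOf_eq, Set.mem_preimage, hA, hψ]
    rw [hcornerE, hrowE, hcolE]
  -- continuity facts
  have hMtcont : Continuous Mt := by
    apply continuous_pi; intro i; apply continuous_pi; intro j
    by_cases h : (i,j) ∈ Sfin
    · simp only [hMt, dif_pos h]; exact continuous_apply _
    · simp only [hMt, dif_neg h]; exact continuous_const
  have hentrycont : ∀ i j : Fin n, Continuous (fun t : ↥Sfin → ℝ => Mt t i j) := by
    intro i j
    by_cases h : (i,j) ∈ Sfin
    · simp only [hMt, dif_pos h]; exact continuous_apply _
    · simp only [hMt, dif_neg h]; exact continuous_const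
  have hcornercont : Continuous (fun t => corner (Mt t)) := by
    apply continuous_pi; intro a; apply continuous_pi; intro b
    exact hentrycont _ _
  have hrowcont : Continuous (fun t => lastRowLeft h1n (Mt t)) := by
    apply continuous_pi; intro b
    exact hentrycont _ _
  have hcolcont : Continuous (fun t => lastColTop h1n (Mt t)) := by
    apply continuous_pi; intro a
    exact hentrycont _ _
  have hpowcont : ∀ i : ℕ, Continuous (fun t => (L⁻¹ • corner (Mt t)) ^ i) := by
    intro i
    induction i with
    | zero => simpa using continuous_const
    | succ i ih =>
      have h1 : Continuous (fun t => L⁻¹ • corner (Mt t)) := hcornercont.const_smul L⁻¹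
      have := h1.matrix_mul ih
      simpa [pow_succ'] using this
  have hψcont : ∀ i : ℕ, Continuous (ψ i) := by
    intro i
    exact hrowcont.dotProduct ((hpowcont i).matrix_mulVec hcolcont)
  have hspeccont : Continuous (fun t => specNorm (corner (Mt t))) :=
    specNorm_continuous.comp hcornercont
  -- measurability of A
  have hAmeas : MeasurableSet A := by
    have hAeq : A = {t | specNorm (corner (Mt t)) ≤ K * Real.sqrt n} ∩
        ⋂ k : ℕ, ⋃ Nk : ℕ, ⋂ j : ℕ, ⋂ _h : Nk ≤ j,
          {t | |∑ i ∈ Finset.range j, ψ i t| ≤ L * ε + 1/(k+1)} := by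
      ext t
      simp only [hA, Set.mem_setOf_eq, Set.mem_inter_iff, Set.mem_iInter, Set.mem_iUnion]
      constructor
      · rintro ⟨habs, hsp⟩
        refine ⟨hsp, fun k => ?_⟩
        obtain ⟨hB, hLpos⟩ := specB_lt hn hK hL (Mt t) hsp
        obtain ⟨vb, hHS, -⟩ :=
          geom_facts (L⁻¹ • corner (Mt t)) (lastColTop h1n (Mt t)) (lastRowLeft h1n (Mt t)) hB
        have habs' : |lastRowLeft h1n (Mt t) ⬝ᵥ vb| ≤ L * ε := by
          rw [← hHS.tsum_eq]; exact habs
        have hklt : L * ε < L * ε + 1/(k+1) := by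
          have : (0:ℝ) < 1/(k+1) := by positivity
          linarith
        have htend := hHS.tendsto_sum_nat.abs
        have hev := htend.eventually_lt_const (lt_of_le_of_lt habs' hklt)
        obtain ⟨Nk, hNk⟩ := Filter.eventually_atTop.mp hev
        exact ⟨Nk, fun j hj => (hNk j hj).le⟩
      · rintro ⟨hsp, hk⟩
        refine ⟨?_, hsp⟩
        obtain ⟨hB, hLpos⟩ := specB_lt hn hK hL (Mt t) hsp
        obtain ⟨vb, hHS, -⟩ :=
          geom_facts (L⁻¹ • corner (Mt t)) (lastColTop h1n (Mt t)) (lastRowLeft h1n (Mt t)) hB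
        rw [hHS.tsum_eq]
        have htend := hHS.tendsto_sum_nat.abs
        apply le_of_forall_pos_le_add
        intro δ hδ
        obtain ⟨k, hkδ⟩ := exists_nat_one_div_lt hδ
        obtain ⟨Nk, hNk⟩ := hk k
        have hle : |lastRowLeft h1n (Mt t) ⬝ᵥ vb| ≤ L * ε + 1/(k+1) :=
          le_of_tendsto htend (Filter.eventually_atTop.2 ⟨Nk, hNk⟩)
        linarith
    rw [hAeq]
    refine (measurableSet_le hspeccont.measurable measurable_const).inter ?_
    refine MeasurableSet.iInter fun k => MeasurableSet.iUnion fun Nk =>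
      MeasurableSet.iInter fun j => MeasurableSet.iInter fun _ => ?_
    have : Continuous (fun t => |∑ i ∈ Finset.range j, ψ i t|) :=
      (continuous_finset_sum _ fun i _ => hψcont i).abs
    exact measurableSet_le this.measurable measurable_const
  have hBmeas : MeasurableSet Bset := by
    have : Bset = (fun t : ↥Tfin → ℝ => t ⟨q, Finset.mem_singleton_self q⟩) ⁻¹' {0} := rfl
    rw [this]
    exact (measurable_pi_apply _) (measurableSet_singleton 0)
  -- independence
  have hmul : μ (XS ⁻¹' A ∩ XT ⁻¹' Bset) = μ (XS ⁻¹' A) * μ (XT ⁻¹' Bset) :=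
    hIF.measure_inter_preimage_eq_mul A Bset hAmeas hBmeas
  have hZ : μ (XT ⁻¹' Bset) = 1/2 := by
    have hZe : XT ⁻¹' Bset = {ω | R ω (lastIdx h1n) (lastIdx h1n) = 0} := rfl
    rw [hZe]
    exact (hdist (lastIdx h1n) (lastIdx h1n)).2.1
  -- pointwise bound on the intersection
  have hmain : XS ⁻¹' A ∩ XT ⁻¹' Bset ⊆
      {ω | smin (Matrix.diagonal (fun i : Fin n => if (i:ℕ) = n - 1 then 0 else L) - R ω)
        ≤ ε} := by
    rintro ω ⟨hωA, hωB⟩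
    simp only [Set.mem_preimage, hA, hψ, Set.mem_setOf_eq] at hωA
    rw [hcornerE, hrowE, hcolE] at hωA
    have hzero : R ω (lastIdx h1n) (lastIdx h1n) = 0 := hωB
    exact main_det hn K L ε hK hL hε (R ω) hωA.2 hzero hωA.1
  -- put everything together
  show (1/2 : ℝ≥0∞) * μ {ω | |∑' i : ℕ, lastRowLeft h1n (R ω) ⬝ᵥ
        (((L⁻¹ • corner (R ω)) ^ i).mulVec (lastColTop h1n (R ω)))| ≤ L * ε ∧
        specNorm (corner (R ω)) ≤ K * Real.sqrt n} ≤ _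
  rw [hpreim]
  calc (1/2 : ℝ≥0∞) * μ (XS ⁻¹' A) = μ (XS ⁻¹' A) * μ (XT ⁻¹' Bset) := by
        rw [hZ, mul_comm]
    _ = μ (XS ⁻¹' A ∩ XT ⁻¹' Bset) := hmul.symm
    _ ≤ μ {ω | smin (Matrix.diagonal (fun i : Fin n => if (i:ℕ) = n - 1 then 0 else L) - R ω)
          ≤ ε} := measure_mono hmain
    _ ≤ _ := le_self_add

end
end
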